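/- arXiv:1508.06239 — 5 statements merged into one kernel-verified Lean document; each statement's English description precedes it below -/
import Mathlib

section
/- The operators Δ_{uv}, Δ_{vw} on Q(q)[u,v,w] (acting on the indicated pairs of variables) satisfy the braid relation Δ_{uv}·Δ_{vw}·Δ_{uv} = Δ_{vw}·Δ_{uv}·Δ_{vw}. -/
/-!
STATEMENT 2: The operators Δ_{uv}, Δ_{vw} on ℚ(q)[u,v,w] (u = X 0, v = X 1, w = X 2),
characterized by (v-u)·(Δ_{uv}P) = (q-1)·v·P + (v-q·u)·P(v,u,w) (w fixed) and analogously
for Δ_{vw}, satisfy the braid relation Δ_{uv}Δ_{vw}Δ_{uv} = Δ_{vw}Δ_{uv}Δ_{vw}.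
-/

noncomputable section
open MvPolynomial

abbrev K : Type := RatFunc ℚ

noncomputable def q : K := RatFunc.X

set_option maxRecDepth 100000 in
set_option maxHeartbeats 4000000 in
theorem delta_braid_relation
    (Duv Dvw : MvPolynomial (Fin 3) K → MvPolynomial (Fin 3) K)
    (hDuv : ∀ P : MvPolynomial (Fin 3) K,
      (X 1 - X 0) * Duv P =
        C (q - 1) * X 1 * P + (X 1 - C q * X 0) * rename (Equiv.swap (0 : Fin 3) 1) P)
    (hDvw : ∀ P : MvPolynomial (Fin 3) K,
      (X 2 - X 1) * Dvw P =
        C (q - 1) * X 2 * P + (X 2 - C q * X 1) * rename (Equiv.swap (1 : Fin 3) 2) P) :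
    ∀ P : MvPolynomial (Fin 3) K, Duv (Dvw (Duv P)) = Dvw (Duv (Dvw P)) := by
  intro P
  have h1 := hDuv P
  have h2 := hDvw (Duv P)
  have h3 := hDuv (Dvw (Duv P))
  have h1' := hDvw P
  have h2' := hDuv (Dvw P)
  have h3' := hDvw (Duv (Dvw P))
  -- swap evaluation facts
  have w1 : (Equiv.swap (0 : Fin 3) 1) 0 = 1 := by decide
  have w2 : (Equiv.swap (0 : Fin 3) 1) 1 = 0 := by decide
  have w3 : (Equiv.swap (0 : Fin 3) 1) 2 = 2 := by decide
  have w4 : (Equiv.swap (1 : Fin 3) 2) 0 = 0 := by decide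
  have w5 : (Equiv.swap (1 : Fin 3) 2) 1 = 2 := by decide
  have w6 : (Equiv.swap (1 : Fin 3) 2) 2 = 1 := by decide
  -- renamed versions of the defining relations
  have h4 := congrArg (rename (Equiv.swap (0 : Fin 3) 1)) h2
  have h5 := congrArg (rename (Equiv.swap (1 : Fin 3) 2)) h1
  have h6 := congrArg (rename (Equiv.swap (0 : Fin 3) 1)) h1
  have h4' := congrArg (rename (Equiv.swap (1 : Fin 3) 2)) h2'
  have h5' := congrArg (rename (Equiv.swap (1 : Fin 3) 2)) h1'
  have h6' := congrArg (rename (Equiv.swap (0 : Fin 3) 1)) h1'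
  simp only [map_one, map_mul, map_sub, map_add, rename_X, rename_C, rename_rename,
    C_1, w1, w2, w3, w4, w5, w6] at h4 h5 h6 h4' h5' h6'
  simp only [map_sub, C_1] at h1 h2 h3 h1' h2' h3'
  have h7 := congrArg (rename (Equiv.swap (0 : Fin 3) 1)) h5
  have h7' := congrArg (rename (Equiv.swap (1 : Fin 3) 2)) h6'
  simp only [map_one, map_mul, map_sub, map_add, rename_X, rename_C, rename_rename,
    C_1, w1, w2, w3, w4, w5, w6] at h7 h7'
  -- normalize composed renames
  have cid1 : (⇑(Equiv.swap (0 : Fin 3) 1) ∘ ⇑(Equiv.swap (0 : Fin 3) 1)) = id := by decide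
  have cid2 : (⇑(Equiv.swap (1 : Fin 3) 2) ∘ ⇑(Equiv.swap (1 : Fin 3) 2)) = id := by decide
  have cA : (⇑(Equiv.swap (0 : Fin 3) 1) ∘ (⇑(Equiv.swap (1 : Fin 3) 2) ∘ ⇑(Equiv.swap (0 : Fin 3) 1)))
      = ⇑(Equiv.swap (0 : Fin 3) 2) := by decide
  have cB : (⇑(Equiv.swap (1 : Fin 3) 2) ∘ (⇑(Equiv.swap (0 : Fin 3) 1) ∘ ⇑(Equiv.swap (1 : Fin 3) 2)))
      = ⇑(Equiv.swap (0 : Fin 3) 2) := by decide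
  rw [cid1, rename_id, AlgHom.id_apply] at h6
  rw [cid2, rename_id, AlgHom.id_apply] at h5'
  rw [cA] at h7
  rw [cB] at h7'
  -- nonvanishing of the denominators
  have hX : ∀ i j : Fin 3, i ≠ j → (X i - X j : MvPolynomial (Fin 3) K) ≠ 0 := by
    intro i j hij h
    exact hij (X_injective (sub_eq_zero.mp h))
  have hD : (((X 1 - X 0) * (X 2 - X 1) * (X 2 - X 0) : MvPolynomial (Fin 3) K)) ^ 2 ≠ 0 :=
    pow_ne_zero _ (mul_ne_zero (mul_ne_zero (hX 1 0 (by decide)) (hX 2 1 (by decide)))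
      (hX 2 0 (by decide)))
  apply mul_left_cancel₀ hD
  linear_combination
      (X 1 - X 0) * (X 2 - X 1) ^ 2 * (X 2 - X 0) ^ 2 * h3
    + (C q - 1) * X 1 * (X 1 - X 0) * (X 2 - X 1) * (X 2 - X 0) ^ 2 * h2
    + (X 1 - C q * X 0) * (X 1 - X 0) * (X 2 - X 1) ^ 2 * (X 2 - X 0) * h4
    + (C q - 1) ^ 2 * X 1 * X 2 * (X 2 - X 1) * (X 2 - X 0) ^ 2 * h1
    + (C q - 1) * X 1 * (X 2 - C q * X 1) * (X 1 - X 0) * (X 2 - X 1) * (X 2 - X 0) * h5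
    - (X 1 - C q * X 0) * (C q - 1) * X 2 * (X 2 - X 1) ^ 2 * (X 2 - X 0) * h6
    + (X 1 - C q * X 0) * (X 2 - C q * X 0) * (X 1 - X 0) * (X 2 - X 1) * (X 2 - X 0) * h7
    - (X 1 - X 0) ^ 2 * (X 2 - X 1) * (X 2 - X 0) ^ 2 * h3'
    - (C q - 1) * X 2 * (X 1 - X 0) * (X 2 - X 1) * (X 2 - X 0) ^ 2 * h2'
    - (X 2 - C q * X 1) * (X 1 - X 0) ^ 2 * (X 2 - X 1) * (X 2 - X 0) * h4'
    - (C q - 1) ^ 2 * X 1 * X 2 * (X 1 - X 0) * (X 2 - X 0) ^ 2 * h1'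
    + (X 2 - C q * X 1) * (C q - 1) * X 2 * (X 1 - X 0) ^ 2 * (X 2 - X 0) * h5'
    - (C q - 1) * X 2 * (X 1 - C q * X 0) * (X 1 - X 0) * (X 2 - X 1) * (X 2 - X 0) * h6'
    - (X 2 - C q * X 1) * (X 2 - C q * X 0) * (X 1 - X 0) * (X 2 - X 1) * (X 2 - X 0) * h7'

end
end

section
/- Fix i ≥ 1 and variables y, x_1, x_2, …. Define f_{i,0} = y^i and f_{i,r+1} = Δ_{x_r,x_{r+1}}(f_{i,r}) for r ≥ 0 (with the convention x_0 = y). Let X_r = y + x_1 + ⋯ + x_r and X_{-1} = 0. Then f_{i,r} = (h_i[(1-q)X_r] − h_i[(1-q)X_{r-1}])/(1-q), where h_i[(1-q)Z] denotes the plethystic evaluation of the complete homogeneous symmetric function h_i at the alphabet (1-q)·Z. -/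
/-!
STATEMENT 4: With variables y = X 0, x_j = X j (j ≥ 1) over ℚ(q), define
f_{i,0} = y^i and f_{i,r+1} = Δ_{x_r,x_{r+1}} f_{i,r} (convention x_0 = y).
Let X_r = y + x_1 + ⋯ + x_r (the set of variables {0,…,r}), X_{-1} = 0.
Then f_{i,r} = (h_i[(1-q)X_r] − h_i[(1-q)X_{r-1}])/(1-q), where
h_i[(1-q)Z] = ∑_{a+b=i} (-q)^b e_b(Z) h_a(Z) (from Exp[(1-q)tZ] = ∏_{z∈Z} (1-qtz)/(1-tz)).
-/

noncomputable section
open MvPolynomial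

/-- elementary symmetric polynomial of the variables in `S` -/
noncomputable def myE (S : Finset ℕ) (n : ℕ) : MvPolynomial ℕ K :=
  ∑ T ∈ S.powersetCard n, ∏ i ∈ T, X i

/-- complete homogeneous symmetric polynomial of the variables in `S` -/
noncomputable def myH (S : Finset ℕ) (n : ℕ) : MvPolynomial ℕ K :=
  ∑ m ∈ S.sym n, (Multiset.map X m.1).prod

/-- the plethystic evaluation h_i[(1-q)·Z] where Z is the sum of the variables in `S` -/
noncomputable def hq (S : Finset ℕ) (i : ℕ) : MvPolynomial ℕ K :=
  ∑ b ∈ Finset.range (i + 1), ((-q) ^ b) • (myE S b * myH S (i - b))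

lemma myE_zero (S : Finset ℕ) : myE S 0 = 1 := by
  simp [myE]

lemma myH_zero (S : Finset ℕ) : myH S 0 = 1 := by
  rw [myH, Finset.sym_zero, Finset.sum_singleton]
  rfl

lemma hq_zero (S : Finset ℕ) : hq S 0 = 1 := by
  simp [hq, myE_zero, myH_zero]

lemma hq_def' (S : Finset ℕ) (i : ℕ) :
    hq S i = ∑ b ∈ Finset.range (i + 1), (-(C q : MvPolynomial ℕ K)) ^ b * (myE S b * myH S (i - b)) := by
  simp [hq, smul_eq_C_mul, map_pow, map_neg]

lemma myE_empty_succ (n : ℕ) : myE ∅ (n + 1) = 0 := by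
  rw [myE, Finset.powersetCard_eq_empty.2 (by simp), Finset.sum_empty]

lemma myH_empty_succ (n : ℕ) : myH ∅ (n + 1) = 0 := by
  simp [myH, Finset.sym_empty]

lemma myE_insert {z : ℕ} {T : Finset ℕ} (hz : z ∉ T) (n : ℕ) :
    myE (insert z T) (n + 1) = myE T (n + 1) + X z * myE T n := by
  rw [myE, Finset.powersetCard_succ_insert hz, Finset.sum_union, Finset.sum_image]
  · rw [myE, myE, Finset.mul_sum]
    congr 1
    refine Finset.sum_congr rfl fun A hA => ?_
    have hzA : z ∉ A := fun h => hz (Finset.mem_powersetCard.1 hA |>.1 h)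
    rw [Finset.prod_insert hzA]
  · intro A hA B hB h
    have hzA : z ∉ A := fun h => hz (Finset.mem_powersetCard.1 hA |>.1 h)
    have hzB : z ∉ B := fun h => hz (Finset.mem_powersetCard.1 hB |>.1 h)
    rw [← Finset.erase_insert hzA, ← Finset.erase_insert hzB, h]
  · rw [Finset.disjoint_left]
    intro A hA hA'
    obtain ⟨B, hB, rfl⟩ := Finset.mem_image.1 hA'
    exact hz (Finset.mem_powersetCard.1 hA |>.1 (Finset.mem_insert_self z B))

lemma sym_insert_eq {z : ℕ} {T : Finset ℕ} (hz : z ∉ T) (n : ℕ) :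
    (insert z T).sym (n + 1) = T.sym (n + 1) ∪ ((insert z T).sym n).image (Sym.cons z) := by
  ext m
  simp only [Finset.mem_union, Finset.mem_sym_iff, Finset.mem_image, Finset.mem_insert]
  constructor
  · intro h
    by_cases hm : z ∈ m
    · right
      refine ⟨m.erase z hm, fun a ha => ?_, Sym.cons_erase hm⟩
      exact h a (Multiset.mem_of_mem_erase ha)
    · left
      intro a ha
      rcases h a ha with rfl | haT
      · exact absurd ha hm
      · exact haT
  · rintro (h | ⟨m', hm', rfl⟩)
    · exact fun a ha => Or.inr (h a ha)
    · intro a ha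
      rw [Sym.mem_cons] at ha
      rcases ha with rfl | ha
      · exact Or.inl rfl
      · exact hm' a ha

lemma myH_insert {z : ℕ} {T : Finset ℕ} (hz : z ∉ T) (n : ℕ) :
    myH (insert z T) (n + 1) = myH T (n + 1) + X z * myH (insert z T) n := by
  rw [myH, sym_insert_eq hz, Finset.sum_union, Finset.sum_image]
  · rw [myH, myH, Finset.mul_sum]
    congr 1
    refine Finset.sum_congr rfl fun m hm => ?_
    simp [Sym.coe_cons, Multiset.map_cons, Multiset.prod_cons]
  · intro m hm m' hm' h
    exact (Sym.cons_inj_right z m m').1 h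
  · rw [Finset.disjoint_left]
    intro m hm hm'
    obtain ⟨m', _, rfl⟩ := Finset.mem_image.1 hm'
    exact hz (Finset.mem_sym_iff.1 hm z (Sym.mem_cons_self z m'))

lemma aux1 {R : Type*} [CommRing R] (c x : R) (E Ht Hs : ℕ → R) (n : ℕ)
    (hH : ∀ b ≤ n, Hs (n + 1 - b) = Ht (n + 1 - b) + x * Hs (n - b))
    (h0 : Hs 0 = Ht 0) :
    ∑ b ∈ Finset.range (n + 1 + 1), c ^ b * (E b * Hs (n + 1 - b))
      = (∑ b ∈ Finset.range (n + 1 + 1), c ^ b * (E b * Ht (n + 1 - b)))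
        + x * ∑ b ∈ Finset.range (n + 1), c ^ b * (E b * Hs (n - b)) := by
  have e2 : ∀ b ∈ Finset.range (n + 1), c ^ b * (E b * Hs (n + 1 - b))
      = c ^ b * (E b * Ht (n + 1 - b)) + x * (c ^ b * (E b * Hs (n - b))) := by
    intro b hb
    rw [hH b (by have := Finset.mem_range.1 hb; omega)]
    ring
  rw [Finset.sum_range_succ, Finset.sum_range_succ (fun b => c ^ b * (E b * Ht (n + 1 - b)))]
  rw [Finset.sum_congr rfl e2, Finset.sum_add_distrib, Nat.sub_self, h0, Finset.mul_sum]
  ring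

lemma aux2 {R : Type*} [CommRing R] (c x : R) (Es Et H : ℕ → R) (n : ℕ)
    (hE : ∀ b, Es (b + 1) = Et (b + 1) + x * Et b)
    (h0 : Es 0 = Et 0) :
    ∑ b ∈ Finset.range (n + 1 + 1), c ^ b * (Es b * H (n + 1 - b))
      = (∑ b ∈ Finset.range (n + 1 + 1), c ^ b * (Et b * H (n + 1 - b)))
        + (c * x) * ∑ b ∈ Finset.range (n + 1), c ^ b * (Et b * H (n - b)) := by
  have e2 : ∀ b ∈ Finset.range (n + 1), c ^ (b + 1) * (Es (b + 1) * H (n + 1 - (b + 1)))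
      = c ^ (b + 1) * (Et (b + 1) * H (n + 1 - (b + 1)))
        + (c * x) * (c ^ b * (Et b * H (n - b))) := by
    intro b hb
    have hb' : n + 1 - (b + 1) = n - b := by omega
    rw [hE b, hb']
    ring
  rw [Finset.sum_range_succ' (fun b => c ^ b * (Es b * H (n + 1 - b))),
    Finset.sum_range_succ' (fun b => c ^ b * (Et b * H (n + 1 - b)))]
  rw [Finset.sum_congr rfl e2, Finset.sum_add_distrib, h0, Finset.mul_sum]
  ring

lemma hq_insert {z : ℕ} {T : Finset ℕ} (hz : z ∉ T) (n : ℕ) :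
    hq (insert z T) (n + 1) =
      X z * hq (insert z T) n + hq T (n + 1) - C q * X z * hq T n := by
  have h1 := aux1 (-(C q : MvPolynomial ℕ K)) (X z) (myE (insert z T)) (myH T)
    (myH (insert z T)) n
    (fun b hb => by
      have hb' : n + 1 - b = (n - b) + 1 := by omega
      rw [hb', myH_insert hz])
    (by rw [myH_zero, myH_zero])
  have h2 := aux2 (-(C q : MvPolynomial ℕ K)) (X z) (myE (insert z T)) (myE T) (myH T) n
    (fun b => myE_insert hz b) (by rw [myE_zero, myE_zero])
  rw [hq_def' (insert z T) (n + 1), hq_def' (insert z T) n, hq_def' T (n + 1), hq_def' T n]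
  linear_combination h1 + h2

lemma hq_empty_succ (n : ℕ) : hq ∅ (n + 1) = 0 := by
  rw [hq_def']
  refine Finset.sum_eq_zero fun b hb => ?_
  rcases b with _ | b
  · have : n + 1 - 0 = n + 1 := by omega
    rw [this, myH_empty_succ, mul_zero, mul_zero]
  · rw [myE_empty_succ, zero_mul, mul_zero]

lemma hq_single (n : ℕ) : hq {0} (n + 1) = C (1 - q) * X 0 ^ (n + 1) := by
  induction n with
  | zero =>
    have h := hq_insert (z := 0) (T := ∅) (by simp) 0
    rw [show (insert 0 ∅ : Finset ℕ) = {0} from rfl] at h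
    rw [h, hq_zero, hq_zero, hq_empty_succ]
    rw [map_sub, map_one]
    ring
  | succ m ih =>
    have h := hq_insert (z := 0) (T := ∅) (by simp) (m + 1)
    rw [show (insert 0 ∅ : Finset ℕ) = {0} from rfl] at h
    rw [h, ih, hq_empty_succ, hq_empty_succ]
    ring

lemma rename_myE (π : ℕ ≃ ℕ) (S : Finset ℕ) (n : ℕ) :
    rename ⇑π (myE S n) = myE (S.image ⇑π) n := by
  have h1 : S.image ⇑π = S.map (Equiv.toEmbedding π) := by
    rw [Finset.map_eq_image, Equiv.coe_toEmbedding]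
  rw [myE, myE, map_sum, h1, Finset.powersetCard_map, Finset.sum_map]
  refine Finset.sum_congr rfl fun A hA => ?_
  have hA2 : ∀ B : Finset ℕ, ((Finset.mapEmbedding π.toEmbedding).toEmbedding B : Finset ℕ)
      = B.map π.toEmbedding := fun _ => rfl
  rw [map_prod, hA2, Finset.prod_map]
  exact Finset.prod_congr rfl fun j hj => by rw [rename_X]; rfl

lemma rename_myH (π : ℕ ≃ ℕ) (S : Finset ℕ) (n : ℕ) :
    rename ⇑π (myH S n) = myH (S.image ⇑π) n := by
  rw [myH, myH, map_sum]
  refine Finset.sum_nbij' (i := fun m => m.map ⇑π) (j := fun m => m.map ⇑π.symm)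
    ?_ ?_ ?_ ?_ ?_
  · intro m hm
    rw [Finset.mem_sym_iff] at hm ⊢
    intro a ha
    obtain ⟨b, hb, rfl⟩ := Sym.mem_map.1 ha
    exact Finset.mem_image_of_mem _ (hm b hb)
  · intro m hm
    rw [Finset.mem_sym_iff] at hm ⊢
    intro a ha
    obtain ⟨b, hb, rfl⟩ := Sym.mem_map.1 ha
    obtain ⟨c, hc, hcb⟩ := Finset.mem_image.1 (hm b hb)
    rw [← hcb, Equiv.symm_apply_apply]
    exact hc
  · intro m hm
    simp [Sym.map_map]
  · intro m hm
    simp [Sym.map_map]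
  · intro m hm
    rw [map_multiset_prod]
    simp [Sym.coe_map, Multiset.map_map, Function.comp_def, rename_X]

lemma rename_hq (π : ℕ ≃ ℕ) (S : Finset ℕ) (i : ℕ) :
    rename ⇑π (hq S i) = hq (S.image ⇑π) i := by
  rw [hq_def', hq_def', map_sum]
  refine Finset.sum_congr rfl fun b hb => ?_
  rw [map_mul, map_mul, map_pow, map_neg, rename_C, rename_myE, rename_myH]

lemma image_swap_range_big (r : ℕ) :
    (Finset.range (r + 1 + 1)).image ⇑(Equiv.swap r (r + 1)) = Finset.range (r + 1 + 1) := by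
  apply Finset.eq_of_subset_of_card_le
  · intro a ha
    obtain ⟨b, hb, rfl⟩ := Finset.mem_image.1 ha
    rw [Finset.mem_range] at hb ⊢
    rcases eq_or_ne b r with rfl | h1
    · rw [Equiv.swap_apply_left]; omega
    rcases eq_or_ne b (r + 1) with rfl | h2
    · rw [Equiv.swap_apply_right]; omega
    · rw [Equiv.swap_apply_of_ne_of_ne h1 h2]; omega
  · rw [Finset.card_image_of_injective _ (Equiv.injective _)]

lemma image_swap_range_small (r : ℕ) :
    (Finset.range r).image ⇑(Equiv.swap r (r + 1)) = Finset.range r := by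
  rw [Finset.image_congr (g := id) ?_, Finset.image_id]
  intro a ha
  rw [Finset.mem_coe, Finset.mem_range] at ha
  exact Equiv.swap_apply_of_ne_of_ne (by omega) (by omega)

lemma image_swap_range_mid (r : ℕ) :
    (Finset.range (r + 1)).image ⇑(Equiv.swap r (r + 1))
      = insert (r + 1) (Finset.range r) := by
  rw [Finset.range_add_one, Finset.image_insert, Equiv.swap_apply_left, image_swap_range_small]

lemma key (r : ℕ) : ∀ i : ℕ,
    (X (r + 1) - X r) *
        (hq (Finset.range (r + 1 + 1)) i - hq (Finset.range (r + 1)) i) =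
      C (q - 1) * X (r + 1) * (hq (Finset.range (r + 1)) i - hq (Finset.range r) i)
      + (X (r + 1) - C q * X r) *
        (hq (insert (r + 1) (Finset.range r)) i - hq (Finset.range r) i) := by
  intro i
  have hq1 : (C (q - 1) : MvPolynomial ℕ K) = C q - 1 := by rw [map_sub, map_one]
  induction i with
  | zero => simp only [hq_zero]; ring
  | succ n ih =>
    have LA := hq_insert (z := r + 1) (T := Finset.range (r + 1)) (by simp) n
    have LB := hq_insert (z := r) (T := Finset.range r) (by simp) n
    have LBpp := hq_insert (z := r + 1) (T := Finset.range r) (by simp) n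
    rw [← Finset.range_add_one] at LA LB
    rw [hq1] at ih ⊢
    linear_combination (X (r + 1) - X r) * LA - (C q - 1) * X (r + 1) * LB
      - (X (r + 1) - C q * X r) * LBpp + X (r + 1) * ih

lemma one_sub_q_ne : (1 : K) - q ≠ 0 := by
  rw [sub_ne_zero]
  intro h
  have h2 : algebraMap (Polynomial ℚ) K 1 = algebraMap (Polynomial ℚ) K Polynomial.X := by
    rw [map_one, RatFunc.algebraMap_X]
    exact h
  have h3 := (RatFunc.algebraMap_injective ℚ) h2
  rw [← Polynomial.C_1] at h3
  exact Polynomial.X_ne_C 1 h3.symm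

theorem f_ir_closed_form (i : ℕ) (hi : 1 ≤ i)
    (D : ℕ → MvPolynomial ℕ K → MvPolynomial ℕ K)
    (hD : ∀ (r : ℕ) (P : MvPolynomial ℕ K),
      (X (r + 1) - X r) * D r P =
        C (q - 1) * X (r + 1) * P + (X (r + 1) - C q * X r) * rename (Equiv.swap r (r + 1)) P)
    (f : ℕ → MvPolynomial ℕ K)
    (hf0 : f 0 = X 0 ^ i)
    (hfs : ∀ r : ℕ, f (r + 1) = D r (f r)) :
    ∀ r : ℕ, f r = C (1 - q)⁻¹ *
      (hq (Finset.range (r + 1)) i - hq (Finset.range r) i) := by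

  intro r
  induction r with
  | zero =>
    rw [hf0, Finset.range_one, Finset.range_zero]
    obtain ⟨m, rfl⟩ : ∃ m, i = m + 1 := ⟨i - 1, by omega⟩
    rw [hq_single, hq_empty_succ, sub_zero, ← mul_assoc, ← map_mul,
      inv_mul_cancel₀ one_sub_q_ne, map_one, one_mul]
  | succ r IH =>
    have hne : (X (r + 1) - X r : MvPolynomial ℕ K) ≠ 0 := by
      rw [sub_ne_zero]
      exact fun h => (by omega : r + 1 ≠ r) (X_injective h)
    apply mul_left_cancel₀ hne
    rw [hfs r, hD r (f r), IH]
    have hren : rename ⇑(Equiv.swap r (r + 1))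
        (C (1 - q)⁻¹ * (hq (Finset.range (r + 1)) i - hq (Finset.range r) i))
        = C (1 - q)⁻¹ *
          (hq (insert (r + 1) (Finset.range r)) i - hq (Finset.range r) i) := by
      rw [map_mul, rename_C, map_sub, rename_hq, rename_hq, image_swap_range_mid,
        image_swap_range_small]
    rw [hren]
    linear_combination (-(C ((1 : K) - q)⁻¹ : MvPolynomial ℕ K)) * key r i


end
end

section
/- Let Γ_+(u) denote the operator on Sym[X] sending F[X] to F[X+u] (plethystic translation by a single variable u), and let B_i be the operator (B_i F)[X] = F[X - (q-1)z^{-1}]·Exp[-zX] |_{z^i}. Then for any monomial u and integer i one has the operator identities Γ_+(u)·B_i = (B_i − u·B_{i-1})·Γ_+(u) and B_i·Γ_+(−u) = Γ_+(−u)·(B_i − u·B_{i-1}). -/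
/-!
STATEMENT 7: Let Γ₊(u) be the plethystic translation F[X] ↦ F[X+u] by the single
letter u = a·y^m (a monomial), and B_i the operator
(B_i F)[X] = F[X−(q−1)z⁻¹]·Exp[−zX]|_{z^i}. Then for any monomial u and integer i:
Γ₊(u)·B_i = (B_i − u·B_{i−1})·Γ₊(u) and B_i·Γ₊(−u) = Γ₊(−u)·(B_i − u·B_{i−1}).
Sym[X] is presented in the power-sum basis over ℚ(q): the ring is
R = MvPolynomial (ℕ ⊕ Unit) K, where inl m ↦ p_{m+1} and inr () is the extra letter y.
Γ₊(u) : p_n ↦ p_n + u^n (u a single letter), Γ₊(−u) : p_n ↦ p_n − u^n.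
-/

noncomputable section
open MvPolynomial

/-- Sym[X] with one extra letter y adjoined, in the power-sum presentation:
`Sum.inl m` is the power sum p_{m+1}, `Sum.inr ()` is the letter y. -/
abbrev R : Type := MvPolynomial (ℕ ⊕ Unit) K

/-- the letter y -/
noncomputable def yv : R := X (Sum.inr ())

/-- Γ₊(u) for the monomial u = a·y^m, treated as a single letter:
p_n ↦ p_n + a^n y^{mn}. -/
noncomputable def Gp (a : K) (m : ℕ) : R →ₐ[K] R :=
  aeval (fun s => match s with
    | Sum.inl n => X (Sum.inl n) + C (a ^ (n + 1)) * yv ^ (m * (n + 1))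
    | Sum.inr _ => yv)

/-- Γ₊(−u) for the monomial u = a·y^m: p_n ↦ p_n − a^n y^{mn}
(translation by the negated letter −u). -/
noncomputable def Gm (a : K) (m : ℕ) : R →ₐ[K] R :=
  aeval (fun s => match s with
    | Sum.inl n => X (Sum.inl n) - C (a ^ (n + 1)) * yv ^ (m * (n + 1))
    | Sum.inr _ => yv)

/-- e_k[X] in the power-sum presentation, via Newton's identity. -/
noncomputable def Ee : ℕ → R
  | 0 => 1
  | (k+1) => (((k : K) + 1)⁻¹) •
      ∑ i ∈ Finset.range (k + 1), ((-1 : K) ^ i) • (X (Sum.inl i) * Ee (k - i))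
  decreasing_by exact Nat.lt_succ_of_le (Nat.sub_le k i)

/-- the substitution F[X] ↦ F[X − (q−1)z⁻¹], with `Polynomial.X` standing for z⁻¹ -/
noncomputable def phiB : R →ₐ[K] Polynomial R :=
  aeval (fun s => match s with
    | Sum.inl n => Polynomial.C (X (Sum.inl n) : R) -
        Polynomial.C (MvPolynomial.C (q ^ (n + 1) - 1)) * Polynomial.X ^ (n + 1)
    | Sum.inr _ => Polynomial.C yv)

/-- the operator (B_r F)[X] = F[X−(q−1)z⁻¹]·Exp[−zX]|_{z^r} for any integer r,
using Exp[−zX] = ∑_k (−1)^k e_k[X] z^k. -/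
noncomputable def Bop (r : ℤ) (F : R) : R :=
  ∑ j ∈ Finset.range ((phiB F).natDegree + 1),
    if 0 ≤ r + j then
      ((-1 : K) ^ ((r + j).toNat)) • (Ee ((r + j).toNat) * (phiB F).coeff j)
    else 0

-- aux defs
noncomputable def U (a : K) (m : ℕ) : R := C a * yv ^ m
noncomputable def Eprev : ℕ → R
  | 0 => 0
  | (k+1) => Ee k

lemma Gp_yv (a : K) (m : ℕ) : Gp a m yv = yv := by simp [Gp, yv]
lemma Gm_yv (a : K) (m : ℕ) : Gm a m yv = yv := by simp [Gm, yv]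

lemma U_pow (a : K) (m : ℕ) (n : ℕ) : (U a m) ^ n = C (a ^ n) * yv ^ (m * n) := by
  simp [U, mul_pow, ← pow_mul, map_pow]

lemma Gp_p (a : K) (m : ℕ) (n : ℕ) :
    Gp a m (X (Sum.inl n)) = X (Sum.inl n) + (U a m) ^ (n + 1) := by
  simp [Gp, U_pow]

lemma Gm_p (a : K) (m : ℕ) (n : ℕ) :
    Gm a m (X (Sum.inl n)) = X (Sum.inl n) - (U a m) ^ (n + 1) := by
  simp [Gm, U_pow]

lemma Gm_Gp (a : K) (m : ℕ) (x : R) : Gm a m (Gp a m x) = x := by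
  have h : (Gm a m).comp (Gp a m) = AlgHom.id K R := by
    apply MvPolynomial.algHom_ext
    intro s
    cases s with
    | inl n =>
      simp [AlgHom.comp_apply, Gp_p, Gm_p, map_add, map_pow, U, map_mul, Gm_yv, algHom_C]
    | inr u => simp [AlgHom.comp_apply, Gp, Gm, yv]
  calc Gm a m (Gp a m x) = ((Gm a m).comp (Gp a m)) x := rfl
  _ = x := by rw [h]; rfl

lemma Gp_Gm (a : K) (m : ℕ) (x : R) : Gp a m (Gm a m x) = x := by
  have h : (Gp a m).comp (Gm a m) = AlgHom.id K R := by
    apply MvPolynomial.algHom_ext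
    intro s
    cases s with
    | inl n =>
      simp [AlgHom.comp_apply, Gp_p, Gm_p, map_sub, map_pow, U, map_mul, Gp_yv, algHom_C]
    | inr u => simp [AlgHom.comp_apply, Gp, Gm, yv]
  calc Gp a m (Gm a m x) = ((Gp a m).comp (Gm a m)) x := rfl
  _ = x := by rw [h]; rfl

lemma Gp_inj (a : K) (m : ℕ) : Function.Injective (Gp a m) :=
  Function.LeftInverse.injective (Gm_Gp a m)

lemma Gm_inj (a : K) (m : ℕ) : Function.Injective (Gm a m) :=
  Function.LeftInverse.injective (Gp_Gm a m)


lemma phiB_Gp (a : K) (m : ℕ) (F : R) :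
    phiB (Gp a m F) = (phiB F).map (Gp a m).toRingHom := by
  have h : phiB.comp (Gp a m) = (Polynomial.mapAlgHom (Gp a m)).comp phiB := by
    apply MvPolynomial.algHom_ext
    intro s
    cases s with
    | inl n =>
      simp only [AlgHom.comp_apply, Gp_p, phiB, Polynomial.coe_mapAlgHom, aeval_X, map_add,
        map_sub, map_mul, map_pow, Polynomial.map_C, Polynomial.map_X, algHom_C, U_pow]
      simp [aeval_X, Gp_p, U_pow, yv, Gp_yv, algHom_C]
      ring
    | inr u =>
      simp [AlgHom.comp_apply, Gp, phiB, yv, Polynomial.mapAlgHom]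
  calc phiB (Gp a m F) = (phiB.comp (Gp a m)) F := rfl
  _ = ((Polynomial.mapAlgHom (Gp a m)).comp phiB) F := by rw [h]
  _ = (phiB F).map (Gp a m).toRingHom := by
      simp [AlgHom.comp_apply, Polynomial.mapAlgHom]

lemma phiB_Gm (a : K) (m : ℕ) (F : R) :
    phiB (Gm a m F) = (phiB F).map (Gm a m).toRingHom := by
  have h : phiB.comp (Gm a m) = (Polynomial.mapAlgHom (Gm a m)).comp phiB := by
    apply MvPolynomial.algHom_ext
    intro s
    cases s with
    | inl n =>
      simp only [AlgHom.comp_apply, Gm_p, phiB, Polynomial.coe_mapAlgHom, aeval_X, map_add,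
        map_sub, map_mul, map_pow, Polynomial.map_C, Polynomial.map_X, algHom_C, U_pow]
      simp [aeval_X, Gm_p, U_pow, yv, Gm_yv, algHom_C]
      ring
    | inr u =>
      simp [AlgHom.comp_apply, Gm, phiB, yv, Polynomial.mapAlgHom]
  calc phiB (Gm a m F) = (phiB.comp (Gm a m)) F := rfl
  _ = ((Polynomial.mapAlgHom (Gm a m)).comp phiB) F := by rw [h]
  _ = (phiB F).map (Gm a m).toRingHom := by
      simp [AlgHom.comp_apply, Polynomial.mapAlgHom]

lemma natDegree_phiB_Gp (a : K) (m : ℕ) (F : R) :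
    (phiB (Gp a m F)).natDegree = (phiB F).natDegree := by
  rw [phiB_Gp, Polynomial.natDegree_map_eq_of_injective (Gp_inj a m)]

lemma natDegree_phiB_Gm (a : K) (m : ℕ) (F : R) :
    (phiB (Gm a m F)).natDegree = (phiB F).natDegree := by
  rw [phiB_Gm, Polynomial.natDegree_map_eq_of_injective (Gm_inj a m)]

lemma coeff_phiB_Gp (a : K) (m : ℕ) (F : R) (j : ℕ) :
    (phiB (Gp a m F)).coeff j = Gp a m ((phiB F).coeff j) := by
  rw [phiB_Gp, Polynomial.coeff_map]; rfl

lemma coeff_phiB_Gm (a : K) (m : ℕ) (F : R) (j : ℕ) :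
    (phiB (Gm a m F)).coeff j = Gm a m ((phiB F).coeff j) := by
  rw [phiB_Gm, Polynomial.coeff_map]; rfl

instance : CharZero K := by
  refine ⟨fun a b h => ?_⟩
  have h2 : (algebraMap (Polynomial ℚ) K) a = (algebraMap (Polynomial ℚ) K) b := by
    simp only [map_natCast]; exact_mod_cast h
  exact_mod_cast RatFunc.algebraMap_injective ℚ h2

lemma newton (k : ℕ) :
    ∑ i ∈ Finset.range k, ((-1 : K) ^ i) • (X (Sum.inl i) * Ee (k - 1 - i))
      = (k : K) • Ee k := by
  cases k with
  | zero => simp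
  | succ j =>
    have hne : ((j : K) + 1) ≠ 0 := by exact_mod_cast Nat.cast_add_one_ne_zero (R := K) j
    rw [Ee, smul_smul]
    push_cast
    rw [mul_inv_cancel₀ hne, one_smul]

lemma Eprev_eq (k i : ℕ) (h : i < k) : Eprev (k - i) = Ee (k - 1 - i) := by
  have h2 : k - i = (k - 1 - i) + 1 := by omega
  rw [h2]
  rfl

lemma smulC (c : K) (x : R) : c • x = C c * x := smul_eq_C_mul x c

lemma C_neg_one_pow (n : ℕ) : (C ((-1 : K) ^ n) : R) = (-1 : R) ^ n := by
  rw [map_pow, map_neg, map_one]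

lemma Gp_Ee (a : K) (m : ℕ) : ∀ k, Gp a m (Ee k) = Ee k + U a m * Eprev k := by
  intro k
  induction k using Nat.strong_induction_on with
  | _ k ih =>
    match k with
    | 0 => simp [Ee, Eprev]
    | (j+1) =>
      have hne : ((j : K) + 1) ≠ 0 := by exact_mod_cast Nat.cast_add_one_ne_zero (R := K) j
      rw [Ee, map_smul, map_sum]
      have hterm : ∀ i ∈ Finset.range (j+1),
          Gp a m (((-1 : K) ^ i) • (X (Sum.inl i) * Ee (j - i)))
            = ((-1 : K) ^ i) • (X (Sum.inl i) * Ee (j - i))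
            + ((-1 : K) ^ i) • (X (Sum.inl i) * (U a m * Eprev (j - i)))
            + ((-1 : K) ^ i) • ((U a m) ^ (i+1) * Ee (j - i))
            + ((-1 : K) ^ i) • ((U a m) ^ (i+1) * (U a m * Eprev (j - i))) := by
        intro i hi
        rw [map_smul, map_mul, Gp_p, ih (j - i) (by omega)]
        rw [show (X (Sum.inl i) + U a m ^ (i+1)) * (Ee (j-i) + U a m * Eprev (j-i))
              = X (Sum.inl i) * Ee (j-i) + X (Sum.inl i) * (U a m * Eprev (j-i))
              + (U a m) ^ (i+1) * Ee (j-i) + (U a m) ^ (i+1) * (U a m * Eprev (j-i))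
            from by ring]
        rw [smul_add, smul_add, smul_add]
      rw [Finset.sum_congr rfl hterm]
      rw [Finset.sum_add_distrib, Finset.sum_add_distrib, Finset.sum_add_distrib]
      have hS1 : ∑ i ∈ Finset.range (j+1), ((-1 : K) ^ i) • (X (Sum.inl i) * Ee (j - i))
          = ((j : K) + 1) • Ee (j+1) := by
        have h := newton (j+1)
        push_cast at h
        simpa using h
      have hS2 : ∑ i ∈ Finset.range (j+1),
            ((-1 : K) ^ i) • (X (Sum.inl i) * (U a m * Eprev (j - i)))
          = U a m * ((j : K) • Ee j) := by
        rw [Finset.sum_range_succ]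
        have h0 : Eprev (j - j) = 0 := by rw [Nat.sub_self]; rfl
        rw [h0, mul_zero, mul_zero, smul_zero, add_zero]
        rw [show ∑ i ∈ Finset.range j, ((-1 : K) ^ i) • (X (Sum.inl i) * (U a m * Eprev (j - i)))
              = ∑ i ∈ Finset.range j, U a m * (((-1 : K) ^ i) • (X (Sum.inl i) * Ee (j - 1 - i)))
            from Finset.sum_congr rfl (fun i hi => by
              rw [Eprev_eq j i (Finset.mem_range.mp hi), mul_smul_comm]
              congr 1
              ring)]
        rw [← Finset.mul_sum, newton j]
      have hS34 : ∑ i ∈ Finset.range (j+1), ((-1 : K) ^ i) • ((U a m) ^ (i+1) * Ee (j - i))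
          + ∑ i ∈ Finset.range (j+1),
              ((-1 : K) ^ i) • ((U a m) ^ (i+1) * (U a m * Eprev (j - i)))
          = U a m * Ee j := by
        rw [Finset.sum_range_succ' (fun i => ((-1 : K) ^ i) • ((U a m) ^ (i+1) * Ee (j - i)))]
        rw [Finset.sum_range_succ]
        have h0 : Eprev (j - j) = 0 := by rw [Nat.sub_self]; rfl
        rw [h0, mul_zero, mul_zero, smul_zero, add_zero]
        have hz : ∀ i ∈ Finset.range j,
            ((-1 : K) ^ (i+1)) • ((U a m) ^ (i+1+1) * Ee (j - (i+1)))
            + ((-1 : K) ^ i) • ((U a m) ^ (i+1) * (U a m * Eprev (j - i))) = 0 := by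
          intro i hi
          have h1 : Eprev (j - i) = Ee (j - (i+1)) := by
            rw [Eprev_eq j i (Finset.mem_range.mp hi)]
            congr 1
            omega
          rw [h1, smulC, smulC, C_neg_one_pow, C_neg_one_pow]
          ring
        rw [add_right_comm, ← Finset.sum_add_distrib, Finset.sum_eq_zero hz, zero_add]
        simp
      rw [add_assoc, hS1, hS2, hS34]
      rw [show Eprev (j+1) = Ee j from rfl]
      have key : ((j:K)+1) • Ee (j+1) + U a m * ((j:K) • Ee j) + U a m * Ee j
          = ((j:K)+1) • (Ee (j+1) + U a m * Ee j) := by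
        simp only [smulC, map_add, map_one]
        ring
      rw [key, inv_smul_smul₀ hne, inv_smul_smul₀ hne]

lemma Gm_U (a : K) (m : ℕ) : Gm a m (U a m) = U a m := by
  simp [U, map_mul, map_pow, Gm_yv, algHom_C]

lemma Gm_Ee_rel (a : K) (m : ℕ) (k : ℕ) :
    Ee k = Gm a m (Ee k) + U a m * Gm a m (Eprev k) := by
  have h := congrArg (Gm a m) (Gp_Ee a m k)
  rw [Gm_Gp, map_add, map_mul, Gm_U] at h
  exact h


theorem gammaPlus_B_commutation (a : K) (m : ℕ) (i : ℤ) :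
    (∀ F : R, Gp a m (Bop i F) =
        Bop i (Gp a m F) - (C a * yv ^ m) * Bop (i - 1) (Gp a m F)) ∧
    (∀ F : R, Bop i (Gm a m F) =
        Gm a m (Bop i F - (C a * yv ^ m) * Bop (i - 1) F)) := by
  have hU : (C a * yv ^ m : R) = U a m := rfl
  constructor
  · intro F
    rw [hU]
    unfold Bop
    simp only [natDegree_phiB_Gp, coeff_phiB_Gp]
    rw [map_sum, Finset.mul_sum, ← Finset.sum_sub_distrib]
    apply Finset.sum_congr rfl
    intro j hj
    by_cases h : 0 ≤ i + (j : ℤ)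
    · rw [if_pos h, if_pos h, map_smul, map_mul, Gp_Ee]
      by_cases h' : 0 ≤ i - 1 + (j : ℤ)
      · rw [if_pos h']
        have ht : (i + (j:ℤ)).toNat = (i - 1 + (j:ℤ)).toNat + 1 := by omega
        rw [ht]
        rw [show Eprev ((i - 1 + (j:ℤ)).toNat + 1) = Ee ((i - 1 + (j:ℤ)).toNat) from rfl]
        simp only [smulC, C_neg_one_pow]
        ring
      · have h0 : (i + (j:ℤ)).toNat = 0 := by omega
        rw [if_neg h', h0]
        simp [Eprev]
    · rw [if_neg h, if_neg h, if_neg (by omega : ¬ (0 ≤ i - 1 + (j:ℤ))), map_zero,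
        mul_zero, sub_zero]
  · intro F
    rw [hU]
    unfold Bop
    simp only [natDegree_phiB_Gm, coeff_phiB_Gm]
    rw [map_sub, map_sum, map_mul, Gm_U, map_sum, Finset.mul_sum, ← Finset.sum_sub_distrib]
    apply Finset.sum_congr rfl
    intro j hj
    by_cases h : 0 ≤ i + (j : ℤ)
    · rw [if_pos h, if_pos h, map_smul, map_mul]
      by_cases h' : 0 ≤ i - 1 + (j : ℤ)
      · rw [if_pos h', map_smul, map_mul]
        have ht : (i + (j:ℤ)).toNat = (i - 1 + (j:ℤ)).toNat + 1 := by omega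
        rw [ht]
        have hrel := Gm_Ee_rel a m ((i - 1 + (j:ℤ)).toNat + 1)
        rw [show Eprev ((i - 1 + (j:ℤ)).toNat + 1) = Ee ((i - 1 + (j:ℤ)).toNat) from rfl] at hrel
        conv_lhs => rw [hrel]
        simp only [smulC, C_neg_one_pow]
        ring
      · have h0 : (i + (j:ℤ)).toNat = 0 := by omega
        rw [if_neg h', h0]
        have hE0 : Ee 0 = (1:R) := by rw [Ee]
        simp [hE0]
    · rw [if_neg h, if_neg h, if_neg (by omega : ¬ (0 ≤ i - 1 + (j:ℤ)))]
      simp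


end
end

section
/- For any Dyck path π and a weight function wt: c(π) → R on the corners of π, and a chosen corner (i,j) ∈ c(π), one has χ(π, wt) = ((q·wt(i,j) − 1)/(q−1))·χ(π, wt₁) + ((1 − wt(i,j))/(q−1))·χ(π′, wt₂), where wt₁ equals wt except that wt₁(i,j) = 1, π′ is π with the corner (i,j) flipped (the smallest Dyck path above both π and the cell (i,j)), and wt₂ agrees with wt on corners of π′ that are corners of π and is 1 elsewhere. -/
/-!
STATEMENT 11: the corner-flip identity for the weighted characteristic function:
χ(π, wt) = ((q·wt(c₀) − 1)/(q−1))·χ(π, wt₁) + ((1 − wt(c₀))/(q−1))·χ(π′, wt₂),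
where c₀ is a corner of π, wt₁ = wt except wt₁(c₀) = 1, π′ is π with the corner c₀
flipped (swapping the East step/North step pair at the corresponding valley), and
wt₂ agrees with wt on corners of π′ that are corners of π and is 1 elsewhere.
-/

noncomputable section
open MvPolynomial

/-- A Dyck word: `true` = North step, `false` = East step; equal numbers of each,
and every prefix has at least as many North as East steps (path stays above the diagonal). -/
def IsDyckWord (s : List Bool) : Prop :=
  s.count true = s.count false ∧ ∀ k : ℕ, ((s.take k).count false) ≤ ((s.take k).count true)

/-- the (sorted) list of positions of the North steps of `s` -/
def Npos (s : List Bool) : List ℕ :=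
  (List.range s.length).filter (fun p => s.getD p false = true)

/-- the (sorted) list of positions of the East steps of `s` -/
def Epos (s : List Bool) : List ℕ :=
  (List.range s.length).filter (fun p => s.getD p false = false)

/-- `Area(π)`: the pairs `(i,j)` (0-indexed; cell in column i+1, row j+1) with `i < j`
such that the cell lies under the path, i.e. the (j+1)-st North step occurs before the
(i+1)-st East step. -/
def area (s : List Bool) (n : ℕ) : Finset (Fin n × Fin n) :=
  Finset.univ.filter (fun p => (p.1 : ℕ) < (p.2 : ℕ) ∧
    (Npos s).getD p.2 0 < (Epos s).getD p.1 0)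

/-- `c(π)`: corners, i.e. cells `(i,j)` (0-indexed) above the path whose southern and
eastern neighbours are below the path. -/
def corners (s : List Bool) (n : ℕ) : Finset (Fin n × Fin n) :=
  Finset.univ.filter (fun p => ¬ ((Npos s).getD p.2 0 < (Epos s).getD p.1 0) ∧
    (Npos s).getD ((p.2 : ℕ) - 1) 0 < (Epos s).getD p.1 0 ∧
    (Npos s).getD p.2 0 < (Epos s).getD ((p.1 : ℕ) + 1) 0)

/-- The characteristic function `χ(π) = ∑_{w ∈ ℤ_{>0}^n} q^{inv(π,w)} x_w`
as a formal power series in the variables x_i, i ∈ ℤ_{>0}; the coefficient of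
a monomial d is the (finite) sum of q^{inv(π,w)} over all w whose monomial x_w is d. -/
noncomputable def chi {n : ℕ} (A : Finset (Fin n × Fin n)) : MvPowerSeries ℕ+ K :=
  fun d : ℕ+ →₀ ℕ =>
    ∑ w : Fin n → {x // x ∈ d.support},
      if (∑ i : Fin n, Finsupp.single ((w i : ℕ+)) 1) = d
      then q ^ ((A.filter (fun p => (w p.1 : ℕ+) > (w p.2 : ℕ+))).card) else 0

/-- The weighted characteristic function `χ(π, wt)`, where `A = Area(π)`,
`Cn = c(π)` and `wt` is the weight function on corners. -/
noncomputable def chiwt {n : ℕ} (A Cn : Finset (Fin n × Fin n))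
    (wt : Fin n × Fin n → K) : MvPowerSeries ℕ+ K :=
  fun d : ℕ+ →₀ ℕ =>
    ∑ w : Fin n → {x // x ∈ d.support},
      if (∑ i : Fin n, Finsupp.single ((w i : ℕ+)) 1) = d
      then q ^ ((A.filter (fun p => (w p.1 : ℕ+) > (w p.2 : ℕ+))).card) *
        ∏ p ∈ Cn.filter (fun p => (w p.1 : ℕ+) ≤ (w p.2 : ℕ+)), wt p
      else 0

/-- flip the corner of π whose cell lies in (0-indexed) column i: swap the adjacent
East/North steps at the corresponding valley of the path. -/
def flipAt (s : List Bool) (i : ℕ) : List Bool :=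
  (s.set ((Epos s).getD i 0) true).set ((Epos s).getD i 0 + 1) false


-- ## Auxiliary lemmas

lemma getD_swap_mid (A B : List ℕ) (x y k : ℕ) :
    (A ++ y :: B).getD k 0 = if k = A.length then y else (A ++ x :: B).getD k 0 := by
  rw [List.getD_eq_getElem?_getD, List.getD_eq_getElem?_getD]
  rcases lt_trichotomy k A.length with h | h | h
  · rw [if_neg (by omega), List.getElem?_append_left h, List.getElem?_append_left h]
  · subst h
    rw [if_pos rfl, List.getElem?_append_right le_rfl]
    simp
  · rw [if_neg (by omega), List.getElem?_append_right (by omega), List.getElem?_append_right (by omega)]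
    obtain ⟨m, hm⟩ : ∃ m, k - A.length = m + 1 := ⟨k - A.length - 1, by omega⟩
    rw [hm, List.getElem?_cons_succ, List.getElem?_cons_succ]

lemma sorted_filter_lt_len_eq (l : List ℕ) (hl : l.Pairwise (· < ·)) (k : ℕ) (hk : k < l.length) :
    (l.filter (fun x => x < l[k] + 1)).length = k + 1 := by
  have hpw := List.pairwise_iff_getElem.mp hl
  obtain ⟨v, hv⟩ : ∃ v, l[k] = v := ⟨_, rfl⟩
  rw [hv]
  conv_lhs => rw [← List.take_append_drop (k+1) l]
  rw [List.filter_append]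
  have h1 : (l.take (k+1)).filter (fun x => x < v + 1) = l.take (k+1) := by
    apply List.filter_eq_self.mpr
    intro x hx
    obtain ⟨m, hm, hx⟩ := List.mem_iff_getElem.mp hx
    rw [List.getElem_take] at hx
    have hm' : m < k + 1 := by simp at hm; omega
    rcases eq_or_lt_of_le (Nat.lt_succ_iff.mp hm') with h | h
    · subst h; rw [hv] at hx; subst hx; simp
    · have := hpw m k (by omega) hk h
      rw [hx, hv] at this; simp; omega
  have h2 : (l.drop (k+1)).filter (fun x => x < v + 1) = [] := by
    apply List.filter_eq_nil_iff.mpr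
    intro x hx
    obtain ⟨m, hm, hx⟩ := List.mem_iff_getElem.mp hx
    rw [List.getElem_drop] at hx
    have := hpw k (k+1+m) hk (by simp at hm; omega) (by omega)
    rw [hx, hv] at this; simp; omega
  rw [h1, h2]
  simp
  omega

lemma sorted_filter_lt_len_le (l : List ℕ) (hl : l.Pairwise (· < ·)) (k : ℕ) (hk : k < l.length)
    (M : ℕ) (hM : M ≤ l[k]) : (l.filter (fun x => x < M)).length ≤ k := by
  have hpw := List.pairwise_iff_getElem.mp hl
  conv_lhs => rw [← List.take_append_drop k l]
  rw [List.filter_append]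
  have h2 : (l.drop k).filter (fun x => x < M) = [] := by
    apply List.filter_eq_nil_iff.mpr
    intro x hx
    obtain ⟨m, hm, hx⟩ := List.mem_iff_getElem.mp hx
    rw [List.getElem_drop] at hx
    have : l[k] ≤ x := by
      rcases Nat.eq_zero_or_pos m with h | h
      · subst hx; simp [h]
      · exact le_of_lt (hx ▸ hpw k (k+m) hk (by simp at hm; omega) (by omega))
    simp; omega
  rw [h2]
  simp
  have := (List.length_filter_le (fun x => decide (x < M)) (l.take k))
  simp at this; omega

lemma take_eq_map_range (s : List Bool) (M : ℕ) (h : M ≤ s.length) :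
    s.take M = (List.range M).map (fun p => s.getD p false) := by
  apply List.ext_getElem
  · simp [h]
  · intro k h1 h2
    have hk : k < s.length := by simp at h1; omega
    simp [List.getD_eq_getElem _ _ hk, List.getElem_take, List.getElem?_eq_getElem hk]

lemma count_take (s : List Bool) (b : Bool) (M : ℕ) (h : M ≤ s.length) :
    (s.take M).count b = ((List.range M).filter (fun p => s.getD p false = b)).length := by
  rw [take_eq_map_range s M h, List.count, List.countP_map, ← List.countP_eq_length_filter]
  congr 1
lemma filter_range_le (P : ℕ → Bool) (M L : ℕ) (h : M ≤ L) :
    ((List.range L).filter P).filter (fun x => x < M) = (List.range M).filter P := by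
  obtain ⟨t, rfl⟩ : ∃ t, L = M + t := ⟨L - M, by omega⟩
  rw [List.range_add, List.filter_append, List.filter_append]
  have h1 : ((List.range M).filter P).filter (fun x => x < M) = (List.range M).filter P := by
    apply List.filter_eq_self.mpr
    intro x hx
    have := (List.mem_filter.mp hx).1
    simp at this ⊢; omega
  have h2 : (((List.range t).map (M + ·)).filter P).filter (fun x => x < M) = [] := by
    apply List.filter_eq_nil_iff.mpr
    intro x hx
    have := (List.mem_filter.mp hx).1
    simp at this ⊢
    obtain ⟨a, _, rfl⟩ := this
    omega
  rw [h1, h2, List.append_nil]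

lemma mem_Npos {s : List Bool} {p : ℕ} : p ∈ Npos s ↔ p < s.length ∧ s.getD p false = true := by
  simp [Npos, List.mem_filter]
lemma mem_Epos {s : List Bool} {p : ℕ} : p ∈ Epos s ↔ p < s.length ∧ s.getD p false = false := by
  simp [Epos, List.mem_filter]
lemma pw_Npos (s : List Bool) : (Npos s).Pairwise (· < ·) := List.pairwise_lt_range.filter _
lemma pw_Epos (s : List Bool) : (Epos s).Pairwise (· < ·) := List.pairwise_lt_range.filter _
lemma dyck_NE (s : List Bool) (hs : IsDyckWord s) (k : ℕ)
    (hkE : k < (Epos s).length) (hkN : k < (Npos s).length) :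
    (Npos s)[k] < (Epos s)[k] := by
  have heM : (Epos s)[k] ∈ Epos s := List.getElem_mem _
  obtain ⟨helen, hegd⟩ := mem_Epos.mp heM
  have hM : (Epos s)[k] + 1 ≤ s.length := helen
  have h2 := hs.2 ((Epos s)[k] + 1)
  rw [count_take s false _ hM, count_take s true _ hM] at h2
  rw [← filter_range_le _ _ s.length hM, ← filter_range_le (fun p => decide (s.getD p false = true)) _ s.length hM] at h2
  have hEq : ((Epos s).filter (fun x => x < (Epos s)[k] + 1)).length = k + 1 :=
    sorted_filter_lt_len_eq _ (pw_Epos s) k hkE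
  by_contra hcon
  push_neg at hcon
  have hne : (Npos s)[k] ≠ (Epos s)[k] := by
    have := (mem_Npos.mp (List.getElem_mem (l := Npos s) (n := k) hkN)).2
    intro h; rw [h, hegd] at this; simp at this
  have hlt : (Epos s)[k] + 1 ≤ (Npos s)[k] := by omega
  have hle := sorted_filter_lt_len_le (Npos s) (pw_Npos s) k hkN _ hlt
  unfold Epos Npos at *
  omega

lemma getD_mem_ne {s : List Bool} {l : List ℕ} (hl : ∀ x ∈ l, x < s.length ∧ s.getD x false = (b : Bool))
    {v : ℕ} (hv : 0 < v) (hvb : s.getD v false = !b) : ∀ k : ℕ, l.getD k 0 ≠ v := by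
  intro k
  rcases lt_or_ge k l.length with h | h
  · rw [List.getD_eq_getElem _ _ h]
    intro hEq
    have := (hl _ (List.getElem_mem h)).2
    rw [hEq, hvb] at this
    simp at this
  · rw [List.getD_eq_default _ _ h]; omega

lemma corner_main (s : List Bool) (n : ℕ) (c₀ : Fin n × Fin n) (hc : c₀ ∈ corners s n) :
    ∃ e : ℕ,
      0 < e ∧ e + 2 ≤ s.length ∧
      1 ≤ (c₀.2 : ℕ) ∧
      (Epos s).getD c₀.1 0 = e ∧
      (Npos s).getD c₀.2 0 = e + 1 ∧
      (∀ k : ℕ, (Npos s).getD k 0 ≠ e) ∧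
      (∀ k : ℕ, (Epos s).getD k 0 ≠ e + 1) ∧
      (∀ k : ℕ, (Npos (flipAt s c₀.1)).getD k 0 = if k = (c₀.2 : ℕ) then e else (Npos s).getD k 0) ∧
      (∀ k : ℕ, (Epos (flipAt s c₀.1)).getD k 0 = if k = (c₀.1 : ℕ) then e + 1 else (Epos s).getD k 0) := by
  simp only [corners, Finset.mem_filter, Finset.mem_univ, true_and] at hc
  obtain ⟨h1, h2, h3⟩ := hc
  set e := (Epos s).getD (c₀.1 : ℕ) 0 with he
  have he0 : 0 < e := lt_of_le_of_lt (Nat.zero_le _) h2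
  have hiE : (c₀.1 : ℕ) < (Epos s).length := by
    by_contra h
    push_neg at h
    rw [List.getD_eq_default _ _ h] at he
    omega
  have hEi_elem : (Epos s)[(c₀.1 : ℕ)] = e := (List.getD_eq_getElem _ _ hiE).symm
  have he_mem : e ∈ Epos s := hEi_elem ▸ List.getElem_mem hiE
  obtain ⟨heL, heF⟩ := mem_Epos.mp he_mem
  have hjN : (c₀.2 : ℕ) < (Npos s).length := by
    by_contra h
    push_neg at h
    rw [List.getD_eq_default _ _ h] at h1
    omega
  have hNj_elem : (Npos s)[(c₀.2 : ℕ)] = (Npos s).getD (c₀.2 : ℕ) 0 :=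
    (List.getD_eq_getElem _ _ hjN).symm
  have hf_mem : (Npos s).getD (c₀.2 : ℕ) 0 ∈ Npos s := hNj_elem ▸ List.getElem_mem hjN
  obtain ⟨hfL, hfT⟩ := mem_Npos.mp hf_mem
  have hj1 : 1 ≤ (c₀.2 : ℕ) := by
    by_contra h
    push_neg at h
    have h0 : (c₀.2 : ℕ) = 0 := by omega
    rw [h0] at h1 h2
    exact h1 h2
  have hef : e < (Npos s).getD (c₀.2 : ℕ) 0 := by
    rcases lt_trichotomy e ((Npos s).getD (c₀.2 : ℕ) 0) with h | h | h
    · exact h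
    · rw [← h, heF] at hfT; simp at hfT
    · exact absurd h h1
  have hpwN := List.pairwise_iff_getElem.mp (pw_Npos s)
  have hpwE := List.pairwise_iff_getElem.mp (pw_Epos s)
  have hfe1 : (Npos s).getD (c₀.2 : ℕ) 0 = e + 1 := by
    by_contra hne
    have hlt : e + 1 < (Npos s).getD (c₀.2 : ℕ) 0 := by omega
    have hpL : e + 1 < s.length := by omega
    cases hb : s.getD (e+1) false
    · -- east step: contradiction with h3
      obtain ⟨k, hk, hke⟩ := List.mem_iff_getElem.mp (mem_Epos.mpr ⟨hpL, hb⟩)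
      have hik : (c₀.1 : ℕ) < k := by
        rcases lt_trichotomy (c₀.1 : ℕ) k with h | h | h
        · exact h
        · subst h; exact absurd (hEi_elem.symm.trans hke) (by omega)
        · have := hpwE k (c₀.1 : ℕ) hk hiE h
          rw [hke, hEi_elem] at this; omega
      have hi1 : (c₀.1 : ℕ) + 1 < (Epos s).length ∨ (c₀.1 : ℕ) + 1 = k := by omega
      have hi1' : (c₀.1 : ℕ) + 1 < (Epos s).length := by omega
      have hle : (Epos s)[(c₀.1 : ℕ) + 1] ≤ e + 1 := by
        rcases eq_or_lt_of_le (show (c₀.1 : ℕ) + 1 ≤ k by omega) with h | h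
        · subst h; exact le_of_eq hke
        · have := hpwE _ k hi1' hk h; rw [hke] at this; exact le_of_lt this
      rw [List.getD_eq_getElem _ _ hi1'] at h3
      omega
    · -- north step: contradiction with h2
      obtain ⟨k, hk, hke⟩ := List.mem_iff_getElem.mp (mem_Npos.mpr ⟨hpL, hb⟩)
      have hkj : k < (c₀.2 : ℕ) := by
        rcases lt_trichotomy k (c₀.2 : ℕ) with h | h | h
        · exact h
        · subst h; exact absurd (hNj_elem.symm.trans hke) (by omega)
        · have := hpwN (c₀.2 : ℕ) k hjN hk h
          rw [hke, hNj_elem] at this; omega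
      have hj1L : (c₀.2 : ℕ) - 1 < (Npos s).length := by omega
      have hle : e + 1 ≤ (Npos s)[(c₀.2 : ℕ) - 1] := by
        rcases eq_or_lt_of_le (show k ≤ (c₀.2 : ℕ) - 1 by omega) with h | h
        · subst h; exact le_of_eq hke.symm
        · have := hpwN k _ hk hj1L h; rw [hke] at this; exact le_of_lt this
      rw [List.getD_eq_getElem _ _ hj1L] at h2
      omega
  have hlen2 : e + 2 ≤ s.length := by omega
  have hgd1 : s.getD (e+1) false = true := by rw [← hfe1]; exact hfT
  have hNne : ∀ k : ℕ, (Npos s).getD k 0 ≠ e :=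
    getD_mem_ne (b := true) (fun x hx => mem_Npos.mp hx) he0 (by simp only [Bool.not_true]; exact heF)
  have hEne : ∀ k : ℕ, (Epos s).getD k 0 ≠ e + 1 :=
    getD_mem_ne (b := false) (fun x hx => mem_Epos.mp hx) (by omega) (by simp only [Bool.not_false]; exact hgd1)
  -- the flipped word
  set t := flipAt s (c₀.1 : ℕ) with ht
  have htdef : t = (s.set e true).set (e+1) false := by rw [ht, flipAt, ← he]
  have htlen : t.length = s.length := by rw [htdef]; simp
  have hte : t.getD e false = true := by
    rw [htdef, List.getD_eq_getElem?_getD, List.getElem?_set_ne (by omega),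
      List.getElem?_set_self (by simpa using heL)]
    simp
  have hte1 : t.getD (e+1) false = false := by
    rw [htdef, List.getD_eq_getElem?_getD, List.getElem?_set_self (by simp; omega)]
    simp
  have htother : ∀ p, p ≠ e → p ≠ e + 1 → t.getD p false = s.getD p false := by
    intro p hp hp1
    rw [htdef, List.getD_eq_getElem?_getD, List.getElem?_set_ne (Ne.symm hp1),
      List.getElem?_set_ne (Ne.symm hp), ← List.getD_eq_getElem?_getD]
  have hrange : List.range s.length =
      ((List.range e ++ [e]) ++ [e+1]) ++ (List.range (s.length - (e+2))).map ((e+2) + ·) := by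
    conv_lhs => rw [show s.length = (e+2) + (s.length - (e+2)) by omega, List.range_add]
    congr 1
    rw [show e + 2 = (e+1) + 1 from rfl, List.range_succ, List.range_succ]
  have heF' : s[e]?.getD false = false := by simpa using heF
  have hgd1' : s[e+1]?.getD false = true := by simpa using hgd1
  have hte' : t[e]?.getD false = true := by simpa using hte
  have hte1' : t[e+1]?.getD false = false := by simpa using hte1
  -- decompositions
  have hcongrE : ∀ l : List ℕ, (∀ x ∈ l, x ≠ e ∧ x ≠ e + 1) →
      l.filter (fun p => t.getD p false = false) = l.filter (fun p => s.getD p false = false) := by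
    intro l hl
    apply List.filter_congr
    intro x hx
    rw [htother x (hl x hx).1 (hl x hx).2]
  have hcongrN : ∀ l : List ℕ, (∀ x ∈ l, x ≠ e ∧ x ≠ e + 1) →
      l.filter (fun p => t.getD p false = true) = l.filter (fun p => s.getD p false = true) := by
    intro l hl
    apply List.filter_congr
    intro x hx
    rw [htother x (hl x hx).1 (hl x hx).2]
  have hrl : ∀ x ∈ List.range e, x ≠ e ∧ x ≠ e + 1 := by
    intro x hx; simp at hx; omega
  have hml : ∀ x ∈ (List.range (s.length - (e+2))).map ((e+2) + ·), x ≠ e ∧ x ≠ e + 1 := by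
    intro x hx
    simp only [List.mem_map] at hx
    obtain ⟨a, _, rfl⟩ := hx
    constructor <;> omega
  have hEs : Epos s = (List.range e).filter (fun p => s.getD p false = false) ++
      e :: ((List.range (s.length - (e+2))).map ((e+2) + ·)).filter (fun p => s.getD p false = false) := by
    rw [Epos, hrange, List.filter_append, List.filter_append, List.filter_append,
      List.filter_singleton, List.filter_singleton]
    rw [show (decide (s.getD e false = false)) = true by simp [heF'],
      show (decide (s.getD (e+1) false = false)) = false by simp [hgd1']]
    simp only [cond_true, cond_false, List.append_nil, List.append_assoc, List.singleton_append]
  have hEt : Epos t = (List.range e).filter (fun p => s.getD p false = false) ++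
      (e+1) :: ((List.range (s.length - (e+2))).map ((e+2) + ·)).filter (fun p => s.getD p false = false) := by
    rw [Epos, htlen, hrange, List.filter_append, List.filter_append, List.filter_append,
      List.filter_singleton, List.filter_singleton]
    rw [show (decide (t.getD e false = false)) = false by simp [hte'],
      show (decide (t.getD (e+1) false = false)) = true by simp [hte1']]
    rw [hcongrE _ hrl, hcongrE _ hml]
    simp only [cond_true, cond_false, List.append_nil, List.append_assoc, List.nil_append,
      List.singleton_append]
  have hNs : Npos s = (List.range e).filter (fun p => s.getD p false = true) ++
      (e+1) :: ((List.range (s.length - (e+2))).map ((e+2) + ·)).filter (fun p => s.getD p false = true) := by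
    rw [Npos, hrange, List.filter_append, List.filter_append, List.filter_append,
      List.filter_singleton, List.filter_singleton]
    rw [show (decide (s.getD e false = true)) = false by simp [heF'],
      show (decide (s.getD (e+1) false = true)) = true by simp [hgd1']]
    simp only [cond_true, cond_false, List.append_nil, List.append_assoc, List.nil_append,
      List.singleton_append]
  have hNt : Npos t = (List.range e).filter (fun p => s.getD p false = true) ++
      e :: ((List.range (s.length - (e+2))).map ((e+2) + ·)).filter (fun p => s.getD p false = true) := by
    rw [Npos, htlen, hrange, List.filter_append, List.filter_append, List.filter_append,
      List.filter_singleton, List.filter_singleton]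
    rw [show (decide (t.getD e false = true)) = true by simp [hte'],
      show (decide (t.getD (e+1) false = true)) = false by simp [hte1']]
    rw [hcongrN _ hrl, hcongrN _ hml]
    simp only [cond_true, cond_false, List.append_nil, List.append_assoc, List.singleton_append]
  -- identify indices
  have hiA : (c₀.1 : ℕ) = ((List.range e).filter (fun p => s.getD p false = false)).length := by
    set A := (List.range e).filter (fun p => s.getD p false = false) with hA
    have hAlen : A.length < (Epos s).length := by rw [hEs]; simp
    have hAe : (Epos s)[A.length]'hAlen = e := by
      have h0 : (Epos s)[A.length]? = some e := by
        rw [hEs, List.getElem?_append_right le_rfl]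
        simp
      rw [List.getElem?_eq_getElem hAlen] at h0
      exact Option.some_injective _ h0
    rcases lt_trichotomy (c₀.1 : ℕ) A.length with h | h | h
    · have := hpwE _ _ hiE hAlen h
      rw [hEi_elem, hAe] at this; omega
    · exact h
    · have := hpwE _ _ hAlen hiE h
      rw [hEi_elem, hAe] at this; omega
  have hjC : (c₀.2 : ℕ) = ((List.range e).filter (fun p => s.getD p false = true)).length := by
    set C := (List.range e).filter (fun p => s.getD p false = true) with hC
    have hClen : C.length < (Npos s).length := by rw [hNs]; simp
    have hCe : (Npos s)[C.length]'hClen = e + 1 := by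
      have h0 : (Npos s)[C.length]? = some (e+1) := by
        rw [hNs, List.getElem?_append_right le_rfl]
        simp
      rw [List.getElem?_eq_getElem hClen] at h0
      exact Option.some_injective _ h0
    rcases lt_trichotomy (c₀.2 : ℕ) C.length with h | h | h
    · have := hpwN _ _ hjN hClen h
      rw [hNj_elem, hfe1, hCe] at this; omega
    · exact h
    · have := hpwN _ _ hClen hjN h
      rw [hNj_elem, hfe1, hCe] at this; omega
  refine ⟨e, he0, hlen2, hj1, rfl, hfe1, hNne, hEne, ?_, ?_⟩
  · intro k
    rw [hNt, hNs, getD_swap_mid _ _ (e+1) e k, ← hjC]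
  · intro k
    rw [hEt, hEs, getD_swap_mid _ _ e (e+1) k, ← hiA]

lemma length_Npos (s : List Bool) : (Npos s).length = s.count true := by
  rw [Npos, ← count_take s true s.length le_rfl, List.take_length]
lemma length_Epos (s : List Bool) : (Epos s).length = s.count false := by
  rw [Epos, ← count_take s false s.length le_rfl, List.take_length]

lemma corner_lt (s : List Bool) (n : ℕ) (hs : IsDyckWord s) (hn : s.count true = n)
    (c₀ : Fin n × Fin n) (hc : c₀ ∈ corners s n) : (c₀.1 : ℕ) < (c₀.2 : ℕ) := by
  simp only [corners, Finset.mem_filter, Finset.mem_univ, true_and] at hc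
  obtain ⟨h1, h2, h3⟩ := hc
  have hNlen : (Npos s).length = n := by rw [length_Npos, hn]
  have hElen : (Epos s).length = n := by rw [length_Epos, ← hs.1, hn]
  by_contra h
  push_neg at h
  have hjE : (c₀.2 : ℕ) < (Epos s).length := by rw [hElen]; exact c₀.2.isLt
  have hjN : (c₀.2 : ℕ) < (Npos s).length := by rw [hNlen]; exact c₀.2.isLt
  have hiE : (c₀.1 : ℕ) < (Epos s).length := by rw [hElen]; exact c₀.1.isLt
  have hd := dyck_NE s hs (c₀.2 : ℕ) hjE hjN
  have hd' : (Npos s).getD (c₀.2 : ℕ) 0 < (Epos s).getD (c₀.2 : ℕ) 0 := by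
    rw [List.getD_eq_getElem _ _ hjN, List.getD_eq_getElem _ _ hjE]
    exact hd
  have hmono : (Epos s).getD (c₀.2 : ℕ) 0 ≤ (Epos s).getD (c₀.1 : ℕ) 0 := by
    rcases eq_or_lt_of_le h with h' | h'
    · rw [h']
    · rw [List.getD_eq_getElem _ _ hjE, List.getD_eq_getElem _ _ hiE]
      exact le_of_lt (List.pairwise_iff_getElem.mp (pw_Epos s) _ _ hjE hiE h')
  omega

lemma area_flip (s t : List Bool) (n : ℕ) (e : ℕ) (i j : Fin n)
    (hij : (i : ℕ) < (j : ℕ))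
    (hEi : (Epos s).getD i 0 = e) (hNj : (Npos s).getD j 0 = e + 1)
    (hNne : ∀ k : ℕ, (Npos s).getD k 0 ≠ e) (hEne : ∀ k : ℕ, (Epos s).getD k 0 ≠ e + 1)
    (hN' : ∀ k : ℕ, (Npos t).getD k 0 = if k = (j : ℕ) then e else (Npos s).getD k 0)
    (hE' : ∀ k : ℕ, (Epos t).getD k 0 = if k = (i : ℕ) then e + 1 else (Epos s).getD k 0) :
    area t n = insert (i, j) (area s n) := by
  ext p
  have hpe : p = (i, j) ↔ ((p.1 : ℕ) = (i : ℕ) ∧ (p.2 : ℕ) = (j : ℕ)) := by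
    rw [Prod.ext_iff]
    simp [Fin.ext_iff]
  simp only [area, Finset.mem_filter, Finset.mem_univ, true_and, Finset.mem_insert,
    hN' (p.2 : ℕ), hE' (p.1 : ℕ), hpe]
  have k1 : (p.2 : ℕ) = (j : ℕ) → (Npos s).getD (p.2 : ℕ) 0 = e + 1 := fun h => by rw [h]; exact hNj
  have k2 : (p.1 : ℕ) = (i : ℕ) → (Epos s).getD (p.1 : ℕ) 0 = e := fun h => by rw [h]; exact hEi
  have k3 := hNne (p.2 : ℕ)
  have k4 := hEne (p.1 : ℕ)
  split_ifs <;> omega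

lemma corners_flip (s t : List Bool) (n : ℕ) (e : ℕ) (i j : Fin n)
    (hj1 : 1 ≤ (j : ℕ))
    (hEi : (Epos s).getD i 0 = e) (hNj : (Npos s).getD j 0 = e + 1)
    (hNne : ∀ k : ℕ, (Npos s).getD k 0 ≠ e) (hEne : ∀ k : ℕ, (Epos s).getD k 0 ≠ e + 1)
    (hN' : ∀ k : ℕ, (Npos t).getD k 0 = if k = (j : ℕ) then e else (Npos s).getD k 0)
    (hE' : ∀ k : ℕ, (Epos t).getD k 0 = if k = (i : ℕ) then e + 1 else (Epos s).getD k 0) :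
    corners t n ∩ corners s n = (corners s n).erase (i, j) := by
  ext p
  have hpe : p = (i, j) ↔ ((p.1 : ℕ) = (i : ℕ) ∧ (p.2 : ℕ) = (j : ℕ)) := by
    rw [Prod.ext_iff]
    simp [Fin.ext_iff]
  simp only [corners, Finset.mem_inter, Finset.mem_erase, Finset.mem_filter, Finset.mem_univ,
    true_and, Ne, hpe, hN' (p.2 : ℕ), hN' ((p.2 : ℕ) - 1), hE' (p.1 : ℕ), hE' ((p.1 : ℕ) + 1)]
  have k1 : (p.2 : ℕ) = (j : ℕ) → (Npos s).getD (p.2 : ℕ) 0 = e + 1 := fun h => by rw [h]; exact hNj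
  have k1' : (p.2 : ℕ) - 1 = (j : ℕ) → (Npos s).getD ((p.2 : ℕ) - 1) 0 = e + 1 := fun h => by rw [h]; exact hNj
  have k2 : (p.1 : ℕ) = (i : ℕ) → (Epos s).getD (p.1 : ℕ) 0 = e := fun h => by rw [h]; exact hEi
  have k2' : (p.1 : ℕ) + 1 = (i : ℕ) → (Epos s).getD ((p.1 : ℕ) + 1) 0 = e := fun h => by rw [h]; exact hEi
  have k3 := hNne (p.2 : ℕ)
  have k3' := hNne ((p.2 : ℕ) - 1)
  have k4 := hEne (p.1 : ℕ)
  have k4' := hEne ((p.1 : ℕ) + 1)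
  split_ifs <;> omega

lemma q_ne_one : (q : K) ≠ 1 := by
  intro h
  have h2 : algebraMap (Polynomial ℚ) (RatFunc ℚ) Polynomial.X = algebraMap (Polynomial ℚ) (RatFunc ℚ) 1 := by
    rw [RatFunc.algebraMap_X, map_one]
    exact h
  have h3 := RatFunc.algebraMap_injective ℚ h2
  have : Polynomial.natDegree (Polynomial.X : Polynomial ℚ) = 0 := by rw [h3]; simp
  simp at this
lemma q_sub_one_ne : (q : K) - 1 ≠ 0 := sub_ne_zero.mpr q_ne_one

theorem chiwt_corner_flip (s : List Bool) (n : ℕ)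
    (hs : IsDyckWord s) (hn : s.count true = n)
    (c₀ : Fin n × Fin n) (hc : c₀ ∈ corners s n)
    (wt : Fin n × Fin n → K) :
    chiwt (area s n) (corners s n) wt =
      MvPowerSeries.C (σ := ℕ+) (R := K) ((q * wt c₀ - 1) / (q - 1)) *
        chiwt (area s n) (corners s n) (Function.update wt c₀ 1) +
      MvPowerSeries.C (σ := ℕ+) (R := K) ((1 - wt c₀) / (q - 1)) *
        chiwt (area (flipAt s c₀.1) n) (corners (flipAt s c₀.1) n)
          (fun p => if p ∈ corners s n then wt p else 1) := by
  obtain ⟨e, he0, hlen2, hj1, hEi, hNj, hNne, hEne, hN', hE'⟩ := corner_main s n c₀ hc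
  have hij := corner_lt s n hs hn c₀ hc
  have harea : area (flipAt s c₀.1) n = insert c₀ (area s n) := by
    have h := area_flip s (flipAt s c₀.1) n e c₀.1 c₀.2 hij hEi hNj hNne hEne hN' hE'
    rwa [Prod.mk.eta] at h
  have hcorn : corners (flipAt s c₀.1) n ∩ corners s n = (corners s n).erase c₀ := by
    have h := corners_flip s (flipAt s c₀.1) n e c₀.1 c₀.2 hj1 hEi hNj hNne hEne hN' hE'
    rwa [Prod.mk.eta] at h
  have hc0area : c₀ ∉ area s n := by
    simp only [area, Finset.mem_filter, Finset.mem_univ, true_and, not_and, hEi, hNj]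
    intro _
    omega
  funext d
  have hadd : ∀ (f g : MvPowerSeries ℕ+ K), (f + g) d = f d + g d := fun _ _ => rfl
  rw [hadd]
  have hC1 := MvPowerSeries.coeff_C_mul (R := K) d
    (chiwt (area s n) (corners s n) (Function.update wt c₀ 1)) ((q * wt c₀ - 1) / (q - 1))
  have hC2 := MvPowerSeries.coeff_C_mul (R := K) d
    (chiwt (area (flipAt s c₀.1) n) (corners (flipAt s c₀.1) n)
      (fun p => if p ∈ corners s n then wt p else 1)) ((1 - wt c₀) / (q - 1))
  rw [show (MvPowerSeries.C (σ := ℕ+) (R := K) ((q * wt c₀ - 1) / (q - 1)) *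
        chiwt (area s n) (corners s n) (Function.update wt c₀ 1)) d =
      ((q * wt c₀ - 1) / (q - 1)) * chiwt (area s n) (corners s n) (Function.update wt c₀ 1) d
      from hC1,
    show (MvPowerSeries.C (σ := ℕ+) (R := K) ((1 - wt c₀) / (q - 1)) *
        chiwt (area (flipAt s c₀.1) n) (corners (flipAt s c₀.1) n)
          (fun p => if p ∈ corners s n then wt p else 1)) d =
      ((1 - wt c₀) / (q - 1)) * chiwt (area (flipAt s c₀.1) n) (corners (flipAt s c₀.1) n)
          (fun p => if p ∈ corners s n then wt p else 1) d from hC2]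
  simp only [chiwt]
  rw [Finset.mul_sum, Finset.mul_sum, ← Finset.sum_add_distrib]
  refine Finset.sum_congr rfl fun w _ => ?_
  by_cases hw : (∑ i : Fin n, Finsupp.single ((w i : ℕ+)) 1) = d
  · rw [if_pos hw, if_pos hw, if_pos hw]
    have hP2 : (∏ p ∈ (corners (flipAt s c₀.1) n).filter
          (fun p => (w p.1 : ℕ+) ≤ (w p.2 : ℕ+)), (if p ∈ corners s n then wt p else 1)) =
        ∏ p ∈ ((corners s n).erase c₀).filter (fun p => (w p.1 : ℕ+) ≤ (w p.2 : ℕ+)), wt p := by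
      rw [← Finset.prod_filter]
      congr 1
      rw [Finset.filter_comm, Finset.filter_mem_eq_inter, hcorn]
    have hup : (∏ p ∈ ((corners s n).erase c₀).filter (fun p => (w p.1 : ℕ+) ≤ (w p.2 : ℕ+)),
          Function.update wt c₀ 1 p) =
        ∏ p ∈ ((corners s n).erase c₀).filter (fun p => (w p.1 : ℕ+) ≤ (w p.2 : ℕ+)), wt p :=
      Finset.prod_congr rfl fun p hp =>
        Function.update_of_ne (Finset.mem_erase.mp (Finset.mem_filter.mp hp).1).1 _ _
    have hmemS : c₀ ∉ ((corners s n).erase c₀).filter (fun p => (w p.1 : ℕ+) ≤ (w p.2 : ℕ+)) :=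
      fun h => absurd rfl (Finset.mem_erase.mp (Finset.mem_filter.mp h).1).1
    have hq := q_sub_one_ne
    by_cases hle : (w c₀.1 : ℕ+) ≤ (w c₀.2 : ℕ+)
    · have hgt : ¬((w c₀.1 : ℕ+) > (w c₀.2 : ℕ+)) := not_lt.mpr hle
      have hfilt : (corners s n).filter (fun p => (w p.1 : ℕ+) ≤ (w p.2 : ℕ+)) =
          insert c₀ (((corners s n).erase c₀).filter (fun p => (w p.1 : ℕ+) ≤ (w p.2 : ℕ+))) := by
        conv_lhs => rw [← Finset.insert_erase hc]
        rw [Finset.filter_insert, if_pos hle]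
      have harea' : (area (flipAt s c₀.1) n).filter (fun p => (w p.1 : ℕ+) > (w p.2 : ℕ+)) =
          (area s n).filter (fun p => (w p.1 : ℕ+) > (w p.2 : ℕ+)) := by
        rw [harea, Finset.filter_insert, if_neg hgt]
      rw [harea', hfilt, Finset.prod_insert hmemS, Finset.prod_insert hmemS, hup,
        Function.update_self, hP2]
      field_simp
      ring
    · have hgt : (w c₀.1 : ℕ+) > (w c₀.2 : ℕ+) := not_le.mp hle
      have hfilt : (corners s n).filter (fun p => (w p.1 : ℕ+) ≤ (w p.2 : ℕ+)) =
          ((corners s n).erase c₀).filter (fun p => (w p.1 : ℕ+) ≤ (w p.2 : ℕ+)) := by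
        conv_lhs => rw [← Finset.insert_erase hc]
        rw [Finset.filter_insert, if_neg hle]
      have hcard : ((area (flipAt s c₀.1) n).filter (fun p => (w p.1 : ℕ+) > (w p.2 : ℕ+))).card =
          ((area s n).filter (fun p => (w p.1 : ℕ+) > (w p.2 : ℕ+))).card + 1 := by
        rw [harea, Finset.filter_insert, if_pos hgt,
          Finset.card_insert_of_notMem (fun hmem => hc0area (Finset.mem_filter.mp hmem).1)]
      rw [hfilt, hup, hP2, hcard, pow_succ]
      field_simp
      ring
  · rw [if_neg hw, if_neg hw, if_neg hw]
    ring

end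
end

section
/- In the Dyck path algebra A_q, the elements y_i ∈ e_k A_q e_k defined by the commutator relation (d_− d_+ − d_+ d_−) = (q−1)·T_1 T_2 ⋯ T_{k−1}·(−y_k) and y_i = q^{-1}·T_i·y_{i+1}·T_i pairwise commute: y_i y_j = y_j y_i for all 1 ≤ i, j ≤ k. -/
set_option synthInstance.maxHeartbeats 1000000
set_option maxHeartbeats 1000000


/-!
STATEMENT 13: In the Dyck path algebra 𝔸_q, the elements y_i ∈ e_k 𝔸_q e_k defined by
(d₋d₊ − d₊d₋) = (q−1)·T₁⋯T_{k−1}·(−y_k) and y_i = q⁻¹·T_i·y_{i+1}·T_i pairwise commute.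

Encoding: an identity holds in the path algebra 𝔸_q iff it holds in every representation,
so we quantify over an arbitrary family of ℚ(q)-modules V k (k ∈ ℤ_{≥0}) with operators
T k i (the loop T_i at vertex k, 1 ≤ i ≤ k−1), d₊ : V k → V (k+1), d₋ : V (k+1) → V k
satisfying all the defining relations of 𝔸_q, together with operators Y i on V (k+1)
(the vertex is written k+1 so that y's exist) satisfying the two defining identities.
In each relation of 𝔸_q, operators compose right-to-left (paths are read right to left).
-/

noncomputable section

lemma q_ne_zero : q ≠ 0 := by unfold q; exact RatFunc.X_ne_zero

lemma one_sub_q_ne_zero : (1:K) - q ≠ 0 := by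
  have hq1 : q ≠ 1 := by
    intro h
    have h2 : (Polynomial.X : Polynomial ℚ) = 1 := by
      apply RatFunc.algebraMap_injective ℚ
      simpa [q, RatFunc.algebraMap_X, map_one] using h
    have := congrArg (fun p => Polynomial.coeff p 1) h2
    simp [Polynomial.coeff_one] at this
  intro h
  exact hq1 (sub_eq_zero.mp h).symm

noncomputable def uprod {M : Type*} [Monoid M] (g : ℕ → M) : ℕ → M
  | 0 => 1
  | n+1 => uprod g n * g (n+1)

noncomputable def dprod {M : Type*} [Monoid M] (g : ℕ → M) : ℕ → ℕ → M
  | 0, _ => 1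
  | ℓ+1, m => g (m + ℓ + 1) * dprod g ℓ m

lemma foldr_mul_init {M : Type*} [Monoid M] (g : ℕ → M) (l : List ℕ) (x : M) :
    l.foldr (fun i f => g (i+1) * f) x = l.foldr (fun i f => g (i+1) * f) 1 * x := by
  induction l with
  | nil => simp
  | cons a l ih => simp [List.foldr_cons, ih, mul_assoc]

lemma foldr_mul_range {M : Type*} [Monoid M] (g : ℕ → M) (n : ℕ) :
    (List.range n).foldr (fun i f => g (i+1) * f) 1 = uprod g n := by
  induction n with
  | zero => simp [uprod]
  | succ n ih =>
    rw [List.range_succ, List.foldr_append, List.foldr_cons, List.foldr_nil,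
      foldr_mul_init, ih, mul_one, uprod]

lemma dprod_split {M : Type*} [Monoid M] (g : ℕ → M) (a b m : ℕ) :
    dprod g (a+b) m = dprod g a (m+b) * dprod g b m := by
  induction a with
  | zero => simp [dprod]
  | succ a ih =>
    have h1 : a + 1 + b = (a + b) + 1 := by omega
    rw [h1, dprod, ih, dprod, mul_assoc]
    congr 2
    omega

lemma dprod_one {M : Type*} [Monoid M] (g : ℕ → M) (m : ℕ) :
    dprod g 1 m = g (m+1) := by
  rw [dprod, dprod, mul_one]

lemma dprod_pop {M : Type*} [Monoid M] (g : ℕ → M) (ℓ m : ℕ) :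
    dprod g (ℓ+1) m = dprod g ℓ (m+1) * g (m+1) := by
  rw [dprod_split g ℓ 1 m, dprod_one]

lemma dprod_zero_succ {M : Type*} [Monoid M] (g : ℕ → M) (ℓ : ℕ) :
    dprod g (ℓ+1) 0 = g (ℓ+1) * dprod g ℓ 0 := by
  rw [dprod, Nat.zero_add]

lemma dprod_one_succ {M : Type*} [Monoid M] (g : ℕ → M) (ℓ : ℕ) :
    dprod g (ℓ+1) 1 = g (ℓ+2) * dprod g ℓ 1 := by
  rw [dprod, show (1:ℕ)+ℓ+1 = ℓ+2 from by omega]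

lemma dprod_comm {M : Type*} [Monoid M] (g : ℕ → M) (ℓ m : ℕ) (x : M)
    (h : ∀ j, m+1 ≤ j → j ≤ m+ℓ → x * g j = g j * x) :
    x * dprod g ℓ m = dprod g ℓ m * x := by
  induction ℓ with
  | zero => simp [dprod]
  | succ ℓ ih =>
    rw [dprod, ← mul_assoc, h (m+ℓ+1) (by omega) (by omega), mul_assoc,
      ih (fun j h1 h2 => h j h1 (by omega)), mul_assoc]

lemma comm_apply {M : Type*} [Monoid M] {x y : M} (h : x*y = y*x) (w : M) :
    x*(y*w) = y*(x*w) := by rw [← mul_assoc, h, mul_assoc]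

lemma braid_apply {M : Type*} [Monoid M] {u v : M} (h : u*(v*u) = v*(u*v)) (w : M) :
    u*(v*(u*w)) = v*(u*(v*w)) := by
  have h0 : u*v*u = v*u*v := by simpa only [← mul_assoc] using h
  simp only [← mul_assoc]; rw [h0]

lemma commute_of_inv {M : Type*} [Monoid M] {x t s : M} (hts : t*s = 1) (hst : s*t = 1)
    (h : Commute x t) : Commute x s := by
  show x * s = s * x
  calc x * s = (s*t)*(x*s) := by rw [hst, one_mul]
    _ = s*((t*x)*s) := by rw [mul_assoc, mul_assoc]
    _ = s*((x*t)*s) := by rw [h.eq]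
    _ = s*(x*(t*s)) := by rw [mul_assoc]
    _ = s*x := by rw [hts, mul_one]

lemma braid_conj {M : Type*} [Monoid M] {u v y : M} (hbr : u*(v*u) = v*(u*v)) (hc : u*y = y*u) :
    v * (u*((v*(y*v))*u)) = (u*((v*(y*v))*u)) * v := by
  have hc1 : ∀ w, u*(y*w) = y*(u*w) := fun w => comm_apply hc w
  simp only [mul_assoc]
  rw [← hbr, ← hc1 (v*u), braid_apply hbr (y*(v*u))]

lemma inv_comm {M : Type*} [Monoid M] {t1 t2 s1 s2 : M} (h1 : t1*s1 = 1) (h1' : s1*t1 = 1)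
    (h2 : t2*s2 = 1) (h2' : s2*t2 = 1) (hco : t1*t2 = t2*t1) : s1*s2 = s2*s1 := by
  have e1 : ∀ w, t1*(s1*w) = w := fun w => by rw [← mul_assoc, h1, one_mul]
  have e2 : ∀ w, t2*(s2*w) = w := fun w => by rw [← mul_assoc, h2, one_mul]
  have hA : (t2*t1) * (s1*s2) = 1 := by
    rw [mul_assoc, ← mul_assoc t1, h1, one_mul, h2]
  have hB : (s2*s1) * (t1*t2) = 1 := by
    rw [mul_assoc, ← mul_assoc s1, h1', one_mul, h2']
  calc s1*s2 = (s2*s1)*(t1*t2)*(s1*s2) := by rw [hB, one_mul]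
    _ = (s2*s1)*((t2*t1)*(s1*s2)) := by rw [mul_assoc, hco]
    _ = s2*s1 := by rw [hA, mul_one]

lemma inv_braid {M : Type*} [Monoid M] {t1 t2 s1 s2 : M} (h1 : t1*s1 = 1) (h1' : s1*t1 = 1)
    (h2 : t2*s2 = 1) (h2' : s2*t2 = 1) (hbr : t1*(t2*t1) = t2*(t1*t2)) :
    s1*(s2*s1) = s2*(s1*s2) := by
  have e1 : ∀ w, t1*(s1*w) = w := fun w => by rw [← mul_assoc, h1, one_mul]
  have e2 : ∀ w, t2*(s2*w) = w := fun w => by rw [← mul_assoc, h2, one_mul]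
  have f1 : ∀ w, s1*(t1*w) = w := fun w => by rw [← mul_assoc, h1', one_mul]
  have f2 : ∀ w, s2*(t2*w) = w := fun w => by rw [← mul_assoc, h2', one_mul]
  have hA : (t1*(t2*t1)) * (s1*(s2*s1)) = 1 := by
    rw [mul_assoc, mul_assoc]
    rw [e1 (s2*s1), e2 s1, h1]
  have hB : (s2*(s1*s2)) * (t2*(t1*t2)) = 1 := by
    rw [mul_assoc, mul_assoc]
    rw [f2 (t1*t2), f1 t2, h2']
  calc s1*(s2*s1) = (s2*(s1*s2)) * (t2*(t1*t2)) * (s1*(s2*s1)) := by rw [hB, one_mul]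
    _ = (s2*(s1*s2)) * ((t1*(t2*t1)) * (s1*(s2*s1))) := by rw [mul_assoc, hbr]
    _ = s2*(s1*s2) := by rw [hA, mul_one]

lemma hecke_inv {M : Type} [AddCommGroup M] [Module K M] {t : M →ₗ[K] M}
    (hquad : t ∘ₗ t = (1 - q) • t + q • LinearMap.id) :
    t * (q⁻¹ • t - (q⁻¹ * ((1:K) - q)) • 1) = 1 ∧
      (q⁻¹ • t - (q⁻¹ * ((1:K) - q)) • 1) * t = 1 := by
  have h : t * t = (1-q) • t + q • 1 := hquad
  constructor
  · rw [mul_sub, mul_smul_comm, mul_smul_comm, mul_one, h, smul_add, smul_smul, smul_smul,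
      inv_mul_cancel₀ q_ne_zero, one_smul]
    abel
  · rw [sub_mul, smul_mul_assoc, smul_mul_assoc, one_mul, h, smul_add, smul_smul, smul_smul,
      inv_mul_cancel₀ q_ne_zero, one_smul]
    abel

theorem dyck_path_algebra_y_commute
    (V : ℕ → Type) [∀ k, AddCommGroup (V k)] [∀ k, Module K (V k)]
    (T : ∀ k : ℕ, ℕ → (V k →ₗ[K] V k))
    (dp : ∀ k : ℕ, V k →ₗ[K] V (k + 1))
    (dm : ∀ k : ℕ, V (k + 1) →ₗ[K] V k)
    -- (T_i − 1)(T_i + q) = 0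
    (hquad : ∀ k i, 1 ≤ i → i + 1 ≤ k →
      (T k i) ∘ₗ (T k i) = (1 - q) • T k i + q • LinearMap.id)
    -- braid relations
    (hbraid : ∀ k i, 1 ≤ i → i + 2 ≤ k →
      (T k i) ∘ₗ (T k (i + 1)) ∘ₗ (T k i) = (T k (i + 1)) ∘ₗ (T k i) ∘ₗ (T k (i + 1)))
    -- T_i T_j = T_j T_i for |i − j| > 1
    (hcomm : ∀ k i j, 1 ≤ i → i + 1 ≤ k → 1 ≤ j → j + 1 ≤ k → i + 1 < j →
      (T k i) ∘ₗ (T k j) = (T k j) ∘ₗ (T k i))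
    -- T_i d₋ = d₋ T_i
    (hTdm : ∀ k i, 1 ≤ i → i + 1 ≤ k →
      (T k i) ∘ₗ (dm k) = (dm k) ∘ₗ (T (k + 1) i))
    -- d₊ T_i = T_{i+1} d₊
    (hdpT : ∀ k i, 1 ≤ i → i + 1 ≤ k →
      (dp k) ∘ₗ (T k i) = (T (k + 1) (i + 1)) ∘ₗ (dp k))
    -- T_1 d₊² = d₊²
    (hT1dp : ∀ k, (T (k + 2) 1) ∘ₗ ((dp (k + 1)) ∘ₗ (dp k)) = (dp (k + 1)) ∘ₗ (dp k))
    -- d₋² T_{k−1} = d₋²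
    (hdmT : ∀ k, ((dm k) ∘ₗ (dm (k + 1))) ∘ₗ (T (k + 2) (k + 1)) = (dm k) ∘ₗ (dm (k + 1)))
    -- d₋ (d₊d₋ − d₋d₊) T_{k−1} = q (d₊d₋ − d₋d₊) d₋  (k ≥ 2)
    (hrel8 : ∀ k, (dm (k + 1)) ∘ₗ
        ((dp (k + 1)) ∘ₗ (dm (k + 1)) - (dm (k + 2)) ∘ₗ (dp (k + 2))) ∘ₗ
          (T (k + 2) (k + 1)) =
      q • (((dp k) ∘ₗ (dm k) - (dm (k + 1)) ∘ₗ (dp (k + 1))) ∘ₗ (dm (k + 1))))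
    -- T_1 (d₊d₋ − d₋d₊) d₊ = q d₊ (d₊d₋ − d₋d₊)  (k ≥ 1)
    (hrel9 : ∀ k, (T (k + 2) 1) ∘ₗ
        ((dp (k + 1)) ∘ₗ (dm (k + 1)) - (dm (k + 2)) ∘ₗ (dp (k + 2))) ∘ₗ (dp (k + 1)) =
      q • ((dp (k + 1)) ∘ₗ ((dp k) ∘ₗ (dm k) - (dm (k + 1)) ∘ₗ (dp (k + 1)))))
    -- the elements y_i at the vertex k+1
    (k : ℕ) (Y : ℕ → (V (k + 1) →ₗ[K] V (k + 1)))
    -- (d₋d₊ − d₊d₋) = (q−1)·T₁⋯T_k·(−y_{k+1})   [vertex k+1]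
    (hYtop : (dm (k + 1)) ∘ₗ (dp (k + 1)) - (dp k) ∘ₗ (dm k) =
      (q - 1) • (((List.range k).foldr
          (fun i f => (T (k + 1) (i + 1)) ∘ₗ f) LinearMap.id) ∘ₗ (-(Y (k + 1)))))
    -- y_i = q⁻¹ T_i y_{i+1} T_i
    (hYrec : ∀ i, 1 ≤ i → i ≤ k →
      Y i = q⁻¹ • ((T (k + 1) i) ∘ₗ (Y (i + 1)) ∘ₗ (T (k + 1) i))) :
    ∀ i j, 1 ≤ i → i ≤ k + 1 → 1 ≤ j → j ≤ k + 1 →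
      (Y i) ∘ₗ (Y j) = (Y j) ∘ₗ (Y i) := by
  have hq : q ≠ 0 := q_ne_zero
  have hq1 : (1:K) - q ≠ 0 := one_sub_q_ne_zero
  rcases Nat.eq_zero_or_pos k with hk0 | hkpos
  · subst hk0
    intro i j hi hik hj hjk
    have hi1 : i = 1 := by omega
    have hj1 : j = 1 := by omega
    subst hi1; subst hj1; rfl
  obtain ⟨m, rfl⟩ : ∃ m, k = m + 1 := ⟨k-1, by omega⟩
  -- restate with normalized indices
  have hYtop2 : (dm (m+2)) ∘ₗ (dp (m+2)) - (dp (m+1)) ∘ₗ (dm (m+1)) =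
      (q - 1) • (((List.range (m+1)).foldr
        (fun i f => (T (m+2) (i + 1)) ∘ₗ f) LinearMap.id) ∘ₗ (-(Y (m+2)))) := hYtop
  have mYrec : ∀ i, 1 ≤ i → i ≤ m+1 →
      Y i = q⁻¹ • ((T (m+2) i) * ((Y (i + 1)) * (T (m+2) i))) := hYrec
  clear hYtop hYrec
  set z : V (m+2) →ₗ[K] V (m+2) := dm (m+2) ∘ₗ dp (m+2) - dp (m+1) ∘ₗ dm (m+1) with hzdef
  set zp : V (m+3) →ₗ[K] V (m+3) := dm (m+3) ∘ₗ dp (m+3) - dp (m+2) ∘ₗ dm (m+2) with hzpdef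
  set zm : V (m+1) →ₗ[K] V (m+1) := dm (m+1) ∘ₗ dp (m+1) - dp m ∘ₗ dm m with hzmdef
  set sb : ℕ → (V (m+2) →ₗ[K] V (m+2)) :=
    fun i => q⁻¹ • T (m+2) i - (q⁻¹ * ((1:K) - q)) • 1 with hsbdef
  set sc : V (m+3) →ₗ[K] V (m+3) :=
    q⁻¹ • T (m+3) 1 - (q⁻¹ * ((1:K) - q)) • 1 with hscdef
  have tsb : ∀ i, 1 ≤ i → i ≤ m+1 → T (m+2) i * sb i = 1 := by
    intro i h1 h2
    rw [hsbdef]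
    exact (hecke_inv (hquad (m+2) i h1 (by omega))).1
  have sbt : ∀ i, 1 ≤ i → i ≤ m+1 → sb i * T (m+2) i = 1 := by
    intro i h1 h2
    rw [hsbdef]
    exact (hecke_inv (hquad (m+2) i h1 (by omega))).2
  have tsc : T (m+3) 1 * sc = 1 := by
    rw [hscdef]; exact (hecke_inv (hquad (m+3) 1 (by omega) (by omega))).1
  have sct : sc * T (m+3) 1 = 1 := by
    rw [hscdef]; exact (hecke_inv (hquad (m+3) 1 (by omega) (by omega))).2
  have tbr : ∀ i, 1 ≤ i → i + 2 ≤ m+2 →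
      T (m+2) i * (T (m+2) (i+1) * T (m+2) i) = T (m+2) (i+1) * (T (m+2) i * T (m+2) (i+1)) :=
    fun i h1 h2 => hbraid (m+2) i h1 h2
  have tco : ∀ i j, 1 ≤ i → i + 1 < j → j ≤ m+1 →
      T (m+2) i * T (m+2) j = T (m+2) j * T (m+2) i :=
    fun i j h1 h2 h3 => hcomm (m+2) i j h1 (by omega) (by omega) (by omega) h2
  have sbr : ∀ i, 1 ≤ i → i + 2 ≤ m+2 →
      sb i * (sb (i+1) * sb i) = sb (i+1) * (sb i * sb (i+1)) := by
    intro i h1 h2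
    exact inv_braid (tsb i h1 (by omega)) (sbt i h1 (by omega))
      (tsb (i+1) (by omega) (by omega)) (sbt (i+1) (by omega) (by omega)) (tbr i h1 h2)
  have sco : ∀ i j, 1 ≤ i → i + 1 < j → j ≤ m+1 →
      sb i * sb j = sb j * sb i := by
    intro i j h1 h2 h3
    exact inv_comm (tsb i h1 (by omega)) (sbt i h1 (by omega))
      (tsb j (by omega) h3) (sbt j (by omega) h3) (tco i j h1 h2 h3)
  -- the rotation relation T_{i+1} z = z T_i
  have R1 : ∀ i, 1 ≤ i → i ≤ m → T (m+2) (i+1) ∘ₗ z = z ∘ₗ T (m+2) i := by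
    intro i h1 h2
    rw [hzdef, LinearMap.comp_sub, LinearMap.sub_comp]
    congr 1
    · calc T (m+2) (i+1) ∘ₗ (dm (m+2) ∘ₗ dp (m+2))
          = (T (m+2) (i+1) ∘ₗ dm (m+2)) ∘ₗ dp (m+2) := by rw [LinearMap.comp_assoc]
        _ = (dm (m+2) ∘ₗ T (m+3) (i+1)) ∘ₗ dp (m+2) := by
              rw [hTdm (m+2) (i+1) (by omega) (by omega)]
        _ = dm (m+2) ∘ₗ (T (m+3) (i+1) ∘ₗ dp (m+2)) := by rw [LinearMap.comp_assoc]
        _ = dm (m+2) ∘ₗ (dp (m+2) ∘ₗ T (m+2) i) := by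
              rw [← hdpT (m+2) i (by omega) (by omega)]
        _ = (dm (m+2) ∘ₗ dp (m+2)) ∘ₗ T (m+2) i := by rw [LinearMap.comp_assoc]
    · calc T (m+2) (i+1) ∘ₗ (dp (m+1) ∘ₗ dm (m+1))
          = (T (m+2) (i+1) ∘ₗ dp (m+1)) ∘ₗ dm (m+1) := by rw [LinearMap.comp_assoc]
        _ = (dp (m+1) ∘ₗ T (m+1) i) ∘ₗ dm (m+1) := by
              rw [← hdpT (m+1) i (by omega) (by omega)]
        _ = dp (m+1) ∘ₗ (T (m+1) i ∘ₗ dm (m+1)) := by rw [LinearMap.comp_assoc]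
        _ = dp (m+1) ∘ₗ (dm (m+1) ∘ₗ T (m+2) i) := by
              rw [hTdm (m+1) i (by omega) (by omega)]
        _ = (dp (m+1) ∘ₗ dm (m+1)) ∘ₗ T (m+2) i := by rw [LinearMap.comp_assoc]
  have R1m : ∀ i, 1 ≤ i → i ≤ m → T (m+2) (i+1) * z = z * T (m+2) i :=
    fun i h1 h2 => R1 i h1 h2
  have G2m : ∀ i, 1 ≤ i → i ≤ m → z * sb i = sb (i+1) * z := by
    intro i h1 h2
    calc z * sb i = (sb (i+1) * T (m+2) (i+1)) * (z * sb i) := by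
          rw [sbt (i+1) (by omega) (by omega), one_mul]
      _ = sb (i+1) * ((T (m+2) (i+1) * z) * sb i) := by simp only [mul_assoc]
      _ = sb (i+1) * ((z * T (m+2) i) * sb i) := by rw [R1m i h1 h2]
      _ = sb (i+1) * (z * (T (m+2) i * sb i)) := by rw [mul_assoc]
      _ = sb (i+1) * z := by rw [tsb i h1 (by omega), mul_one]
  -- relations 8/9 in clean operator form
  have h8a : dm (m+2) ∘ₗ (zp ∘ₗ T (m+3) (m+2)) = q • (z ∘ₗ dm (m+2)) := by
    have h : (dm (m+2)) ∘ₗ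
        ((dp (m+2)) ∘ₗ (dm (m+2)) - (dm (m+3)) ∘ₗ (dp (m+3))) ∘ₗ (T (m+3) (m+2)) =
        q • (((dp (m+1)) ∘ₗ (dm (m+1)) - (dm (m+2)) ∘ₗ (dp (m+2))) ∘ₗ (dm (m+2))) :=
      hrel8 (m+1)
    have hn1 : (dp (m+2)) ∘ₗ (dm (m+2)) - (dm (m+3)) ∘ₗ (dp (m+3)) = -zp := by
      rw [hzpdef]; exact (neg_sub _ _).symm
    have hn2 : (dp (m+1)) ∘ₗ (dm (m+1)) - (dm (m+2)) ∘ₗ (dp (m+2)) = -z := by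
      rw [hzdef]; exact (neg_sub _ _).symm
    rw [hn1, hn2] at h
    simpa only [LinearMap.neg_comp, LinearMap.comp_neg, smul_neg, neg_inj] using h
  have h9a : T (m+3) 1 ∘ₗ (zp ∘ₗ dp (m+2)) = q • (dp (m+2) ∘ₗ z) := by
    have h : (T (m+3) 1) ∘ₗ
        ((dp (m+2)) ∘ₗ (dm (m+2)) - (dm (m+3)) ∘ₗ (dp (m+3))) ∘ₗ (dp (m+2)) =
        q • ((dp (m+2)) ∘ₗ ((dp (m+1)) ∘ₗ (dm (m+1)) - (dm (m+2)) ∘ₗ (dp (m+2)))) :=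
      hrel9 (m+1)
    have hn1 : (dp (m+2)) ∘ₗ (dm (m+2)) - (dm (m+3)) ∘ₗ (dp (m+3)) = -zp := by
      rw [hzpdef]; exact (neg_sub _ _).symm
    have hn2 : (dp (m+1)) ∘ₗ (dm (m+1)) - (dm (m+2)) ∘ₗ (dp (m+2)) = -z := by
      rw [hzdef]; exact (neg_sub _ _).symm
    rw [hn1, hn2] at h
    simpa only [LinearMap.neg_comp, LinearMap.comp_neg, smul_neg, neg_inj] using h
  have h8b : dm (m+1) ∘ₗ (z ∘ₗ T (m+2) (m+1)) = q • (zm ∘ₗ dm (m+1)) := by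
    have h : (dm (m+1)) ∘ₗ
        ((dp (m+1)) ∘ₗ (dm (m+1)) - (dm (m+2)) ∘ₗ (dp (m+2))) ∘ₗ (T (m+2) (m+1)) =
        q • (((dp m) ∘ₗ (dm m) - (dm (m+1)) ∘ₗ (dp (m+1))) ∘ₗ (dm (m+1))) :=
      hrel8 m
    have hn1 : (dp (m+1)) ∘ₗ (dm (m+1)) - (dm (m+2)) ∘ₗ (dp (m+2)) = -z := by
      rw [hzdef]; exact (neg_sub _ _).symm
    have hn2 : (dp m) ∘ₗ (dm m) - (dm (m+1)) ∘ₗ (dp (m+1)) = -zm := by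
      rw [hzmdef]; exact (neg_sub _ _).symm
    rw [hn1, hn2] at h
    simpa only [LinearMap.neg_comp, LinearMap.comp_neg, smul_neg, neg_inj] using h
  have h9b : T (m+2) 1 ∘ₗ (z ∘ₗ dp (m+1)) = q • (dp (m+1) ∘ₗ zm) := by
    have h : (T (m+2) 1) ∘ₗ
        ((dp (m+1)) ∘ₗ (dm (m+1)) - (dm (m+2)) ∘ₗ (dp (m+2))) ∘ₗ (dp (m+1)) =
        q • ((dp (m+1)) ∘ₗ ((dp m) ∘ₗ (dm m) - (dm (m+1)) ∘ₗ (dp (m+1)))) :=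
      hrel9 m
    have hn1 : (dp (m+1)) ∘ₗ (dm (m+1)) - (dm (m+2)) ∘ₗ (dp (m+2)) = -z := by
      rw [hzdef]; exact (neg_sub _ _).symm
    have hn2 : (dp m) ∘ₗ (dm m) - (dm (m+1)) ∘ₗ (dp (m+1)) = -zm := by
      rw [hzmdef]; exact (neg_sub _ _).symm
    rw [hn1, hn2] at h
    simpa only [LinearMap.neg_comp, LinearMap.comp_neg, smul_neg, neg_inj] using h
  -- pointwise versions
  have pe8a : ∀ w, dm (m+2) (zp (T (m+3) (m+2) w)) = q • z (dm (m+2) w) := by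
    intro w
    simpa using LinearMap.congr_fun h8a w
  have pe9a : ∀ w, T (m+3) 1 (zp (dp (m+2) w)) = q • dp (m+2) (z w) := by
    intro w
    simpa using LinearMap.congr_fun h9a w
  have pe8b : ∀ w, dm (m+1) (z (T (m+2) (m+1) w)) = q • zm (dm (m+1) w) := by
    intro w
    simpa using LinearMap.congr_fun h8b w
  have pe9b : ∀ w, T (m+2) 1 (z (dp (m+1) w)) = q • dp (m+1) (zm w) := by
    intro w
    simpa using LinearMap.congr_fun h9b w
  have pc1 : ∀ w, T (m+3) (m+2) (dp (m+2) w) = dp (m+2) (T (m+2) (m+1) w) := by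
    intro w
    simpa using (LinearMap.congr_fun (hdpT (m+2) (m+1) (by omega) (by omega)) w).symm
  have pTdm1 : ∀ w, T (m+2) 1 (dm (m+2) w) = dm (m+2) (T (m+3) 1 w) := by
    intro w
    simpa using LinearMap.congr_fun (hTdm (m+2) 1 (by omega) (by omega)) w
  have pc2 : ∀ w, dm (m+2) (sc w) = sb 1 (dm (m+2) w) := by
    intro w
    rw [hscdef, hsbdef]
    simp only [LinearMap.sub_apply, LinearMap.smul_apply, Module.End.one_apply,
      map_sub, map_smul]
    rw [← pTdm1 w]
  have psc : ∀ w, sc (T (m+3) 1 w) = w := by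
    intro w
    simpa using LinearMap.congr_fun sct w
  have psb1 : ∀ w, sb 1 (T (m+2) 1 w) = w := by
    intro w
    simpa using LinearMap.congr_fun (sbt 1 (by omega) (by omega)) w
  have ptsb1 : ∀ w, T (m+2) 1 (sb 1 w) = w := by
    intro w
    simpa using LinearMap.congr_fun (tsb 1 (by omega) (by omega)) w
  have pz : ∀ w, z w = dm (m+2) (dp (m+2) w) - dp (m+1) (dm (m+1) w) := by
    intro w
    rw [hzdef]
    simp
  -- key pointwise computations for G3
  have key1 : ∀ v, q • z (dm (m+2) (dp (m+2) v)) =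
      q • sb 1 (dm (m+2) (dp (m+2) (z (T (m+2) (m+1) v)))) := by
    intro v
    calc q • z (dm (m+2) (dp (m+2) v))
        = dm (m+2) (zp (T (m+3) (m+2) (dp (m+2) v))) := (pe8a _).symm
      _ = dm (m+2) (zp (dp (m+2) (T (m+2) (m+1) v))) := by rw [pc1]
      _ = dm (m+2) (sc (T (m+3) 1 (zp (dp (m+2) (T (m+2) (m+1) v))))) := by rw [psc]
      _ = dm (m+2) (sc (q • dp (m+2) (z (T (m+2) (m+1) v)))) := by rw [pe9a]
      _ = q • dm (m+2) (sc (dp (m+2) (z (T (m+2) (m+1) v))))  := by rw [map_smul, map_smul]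
      _ = q • sb 1 (dm (m+2) (dp (m+2) (z (T (m+2) (m+1) v))))  := by rw [pc2]
  have key2 : ∀ v, q • z (dp (m+1) (dm (m+1) v)) =
      q • sb 1 (dp (m+1) (dm (m+1) (z (T (m+2) (m+1) v)))) := by
    intro v
    calc q • z (dp (m+1) (dm (m+1) v))
        = q • sb 1 (T (m+2) 1 (z (dp (m+1) (dm (m+1) v)))) := by rw [psb1]
      _ = q • sb 1 (q • dp (m+1) (zm (dm (m+1) v))) := by rw [pe9b]
      _ = q • sb 1 (dp (m+1) (q • zm (dm (m+1) v))) := by rw [map_smul (dp (m+1))]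
      _ = q • sb 1 (dp (m+1) (dm (m+1) (z (T (m+2) (m+1) v)))) := by rw [← pe8b v]
  have pG3 : ∀ v, T (m+2) 1 (z (z v)) = z (z (T (m+2) (m+1) v)) := by
    intro v
    apply smul_right_injective (V (m+2)) hq
    show q • T (m+2) 1 (z (z v)) = q • z (z (T (m+2) (m+1) v))
    calc q • T (m+2) 1 (z (z v))
        = T (m+2) 1 (q • z (z v)) := (map_smul _ _ _).symm
      _ = T (m+2) 1 (q • z (dm (m+2) (dp (m+2) v) - dp (m+1) (dm (m+1) v))) := by rw [← pz]
      _ = T (m+2) 1 (q • z (dm (m+2) (dp (m+2) v)) - q • z (dp (m+1) (dm (m+1) v))) := by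
            rw [map_sub z, smul_sub]
      _ = T (m+2) 1 (q • sb 1 (dm (m+2) (dp (m+2) (z (T (m+2) (m+1) v))))
            - q • sb 1 (dp (m+1) (dm (m+1) (z (T (m+2) (m+1) v))))) := by
            rw [key1, key2]
      _ = T (m+2) 1 (q • sb 1 (dm (m+2) (dp (m+2) (z (T (m+2) (m+1) v)))
            - dp (m+1) (dm (m+1) (z (T (m+2) (m+1) v))))) := by
            rw [map_sub (sb 1), smul_sub]
      _ = T (m+2) 1 (q • sb 1 (z (z (T (m+2) (m+1) v)))) := by rw [← pz]
      _ = q • T (m+2) 1 (sb 1 (z (z (T (m+2) (m+1) v)))) := by rw [map_smul]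
      _ = q • z (z (T (m+2) (m+1) v)) := by rw [ptsb1]
  have G3m : T (m+2) 1 * (z * z) = (z * z) * T (m+2) (m+1) := by
    apply LinearMap.ext
    intro v
    simpa only [Module.End.mul_apply] using pG3 v
  -- product bookkeeping
  have hfold : ((List.range (m+1)).foldr
      (fun i f => (T (m+2) (i + 1)) ∘ₗ f) LinearMap.id) = uprod (T (m+2)) (m+1) :=
    foldr_mul_range (T (m+2)) (m+1)
  have hSP : ∀ n, n ≤ m+1 → dprod sb n 0 * uprod (T (m+2)) n = 1 := by
    intro n
    induction n with
    | zero => intro _; simp [dprod, uprod]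
    | succ n ih =>
      intro h
      rw [dprod_zero_succ, uprod]
      calc (sb (n+1) * dprod sb n 0) * (uprod (T (m+2)) n * T (m+2) (n+1))
          = sb (n+1) * ((dprod sb n 0 * uprod (T (m+2)) n) * T (m+2) (n+1)) := by
            simp only [mul_assoc]
        _ = sb (n+1) * T (m+2) (n+1) := by rw [ih (by omega), one_mul]
        _ = 1 := sbt (n+1) (by omega) (by omega)
  have hYv : Y (m+2) = ((1:K)-q)⁻¹ • (dprod sb (m+1) 0 * z) := by
    have h1 := hYtop2
    rw [hfold, LinearMap.comp_neg, smul_neg, ← neg_smul, neg_sub] at h1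
    rw [← Module.End.mul_eq_comp] at h1
    have h2 : dprod sb (m+1) 0 * z = ((1:K)-q) • Y (m+2) := by
      rw [h1, mul_smul_comm, ← mul_assoc, hSP (m+1) le_rfl, one_mul]
    rw [h2, smul_smul, inv_mul_cancel₀ hq1, one_smul]
  have G1 : ∀ a, 1 ≤ a → a + 1 ≤ m+1 →
      dprod sb (m+1) 0 * sb (a+1) = sb a * dprod sb (m+1) 0 := by
    intro a h1 h2
    obtain ⟨b, rfl⟩ : ∃ b, a = b + 1 := ⟨a-1, by omega⟩
    have hsplit : dprod sb (m+1) 0 =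
        dprod sb (m-1-b) (b+2) * (sb (b+2) * (sb (b+1) * dprod sb b 0)) := by
      have h3 : m+1 = (m-1-b) + (b+2) := by omega
      rw [h3, dprod_split, Nat.zero_add, dprod_zero_succ, dprod_zero_succ]
    have hBcomm : dprod sb b 0 * sb (b+2) = sb (b+2) * dprod sb b 0 := by
      refine (dprod_comm sb b 0 (sb (b+2)) ?_).symm
      intro j hj1 hj2
      exact (sco j (b+2) (by omega) (by omega) (by omega)).symm
    have hAcomm : dprod sb (m-1-b) (b+2) * sb (b+1) = sb (b+1) * dprod sb (m-1-b) (b+2) := by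
      refine (dprod_comm sb (m-1-b) (b+2) (sb (b+1)) ?_).symm
      intro j hj1 hj2
      exact sco (b+1) j (by omega) (by omega) (by omega)
    rw [hsplit]
    simp only [mul_assoc]
    rw [hBcomm, ← braid_apply (sbr (b+1) (by omega) (by omega)) (dprod sb b 0),
      comm_apply hAcomm (sb (b+2) * (sb (b+1) * dprod sb b 0))]
  have tS : ∀ a, 1 ≤ a → a ≤ m →
      T (m+2) a * dprod sb (m+1) 0 = dprod sb (m+1) 0 * T (m+2) (a+1) := by
    intro a h1 h2
    calc T (m+2) a * dprod sb (m+1) 0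
        = T (m+2) a * (dprod sb (m+1) 0 * (sb (a+1) * T (m+2) (a+1))) := by
          rw [sbt (a+1) (by omega) (by omega), mul_one]
      _ = T (m+2) a * ((dprod sb (m+1) 0 * sb (a+1)) * T (m+2) (a+1)) := by rw [mul_assoc]
      _ = T (m+2) a * ((sb a * dprod sb (m+1) 0) * T (m+2) (a+1)) := by
          rw [G1 a h1 (by omega)]
      _ = (T (m+2) a * sb a) * (dprod sb (m+1) 0 * T (m+2) (a+1)) := by
          simp only [mul_assoc]
      _ = dprod sb (m+1) 0 * T (m+2) (a+1) := by rw [tsb a h1 (by omega), one_mul]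
  have ZS : ∀ n, n ≤ m → z * dprod sb n 0 = dprod sb n 1 * z := by
    intro n
    induction n with
    | zero => intro _; simp [dprod]
    | succ n ih =>
      intro h
      rw [dprod_zero_succ, dprod_one_succ]
      calc z * (sb (n+1) * dprod sb n 0)
          = (z * sb (n+1)) * dprod sb n 0 := by rw [mul_assoc]
        _ = (sb (n+2) * z) * dprod sb n 0 := by rw [G2m (n+1) (by omega) (by omega)]
        _ = sb (n+2) * (z * dprod sb n 0) := by rw [mul_assoc]
        _ = sb (n+2) * (dprod sb n 1 * z) := by rw [ih (by omega)]
        _ = (sb (n+2) * dprod sb n 1) * z := by rw [mul_assoc]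
  have SU : ∀ n, n ≤ m →
      dprod sb (m+1) 0 * dprod sb n 1 = dprod sb n 0 * dprod sb (m+1) 0 := by
    intro n
    induction n with
    | zero => intro _; simp [dprod]
    | succ n ih =>
      intro h
      rw [dprod_zero_succ sb n, dprod_one_succ sb n]
      calc dprod sb (m+1) 0 * (sb (n+2) * dprod sb n 1)
          = (dprod sb (m+1) 0 * sb (n+2)) * dprod sb n 1 := by rw [mul_assoc]
        _ = (sb (n+1) * dprod sb (m+1) 0) * dprod sb n 1 := by
            rw [G1 (n+1) (by omega) (by omega)]
        _ = sb (n+1) * (dprod sb (m+1) 0 * dprod sb n 1) := by rw [mul_assoc]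
        _ = sb (n+1) * (dprod sb n 0 * dprod sb (m+1) 0) := by rw [ih (by omega)]
        _ = (sb (n+1) * dprod sb n 0) * dprod sb (m+1) 0 := by rw [mul_assoc]
  -- the core commutation identity
  have hc1 : T (m+2) (m+1) * dprod sb (m+1) 0 = dprod sb m 0 := by
    rw [dprod_zero_succ, ← mul_assoc, tsb (m+1) (by omega) le_rfl, one_mul]
  have hc2 : z * dprod sb m 0 = dprod sb m 1 * z := ZS m le_rfl
  have hc3 : z * (z * T (m+2) (m+1)) = T (m+2) 1 * (z * z) := by
    rw [← mul_assoc]; exact G3m.symm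
  have hc4 : dprod sb (m+1) 0 * dprod sb m 1 = dprod sb m 0 * dprod sb (m+1) 0 :=
    SU m le_rfl
  have hc5 : dprod sb (m+1) 0 * T (m+2) 1 = dprod sb m 1 := by
    rw [dprod_pop]
    simp only [Nat.zero_add]
    rw [mul_assoc, sbt 1 (by omega) (by omega), mul_one]
  have core : T (m+2) (m+1) * (dprod sb (m+1) 0 * (z * (T (m+2) (m+1) * (dprod sb (m+1) 0 * z))))
      = dprod sb (m+1) 0 * (z * (T (m+2) (m+1) * (dprod sb (m+1) 0 * (z * T (m+2) (m+1))))) := by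
    have h1' : ∀ w, T (m+2) (m+1) * (dprod sb (m+1) 0 * w) = dprod sb m 0 * w :=
      fun w => by rw [← mul_assoc, hc1]
    have h2' : ∀ w, z * (dprod sb m 0 * w) = dprod sb m 1 * (z * w) :=
      fun w => by rw [← mul_assoc, hc2, mul_assoc]
    have h4' : ∀ w, dprod sb (m+1) 0 * (dprod sb m 1 * w) =
        dprod sb m 0 * (dprod sb (m+1) 0 * w) :=
      fun w => by rw [← mul_assoc, hc4, mul_assoc]
    have h5' : ∀ w, dprod sb (m+1) 0 * (T (m+2) 1 * w) = dprod sb m 1 * w :=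
      fun w => by rw [← mul_assoc, hc5]
    rw [h1' z, h2' z, h1' (dprod sb m 1 * (z * z)),
      h1' (z * T (m+2) (m+1)), h2' (z * T (m+2) (m+1)), hc3,
      h4' (T (m+2) 1 * (z * z)), h5' (z * z)]
  have F2 : Commute (Y (m+1)) (Y (m+2)) := by
    show Y (m+1) * Y (m+2) = Y (m+2) * Y (m+1)
    rw [mYrec (m+1) (by omega) le_rfl, hYv]
    simp only [smul_mul_assoc, mul_smul_comm, smul_smul]
    rw [show q⁻¹ * ((1:K)-q)⁻¹ * ((1:K)-q)⁻¹ = ((1:K)-q)⁻¹ * (q⁻¹ * ((1:K)-q)⁻¹) from by ring]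
    have hop : (T (m+2) (m+1) * (dprod sb (m+1) 0 * z * T (m+2) (m+1)) * (dprod sb (m+1) 0 * z))
        = (dprod sb (m+1) 0 * z * (T (m+2) (m+1) * (dprod sb (m+1) 0 * z * T (m+2) (m+1)))) := by
      simp only [mul_assoc]
      exact core
    rw [hop]
  have F1 : ∀ a, 1 ≤ a → a ≤ m → Commute (T (m+2) a) (Y (m+2)) := by
    intro a h1 h2
    rw [hYv]
    refine Commute.smul_right ?_ _
    show T (m+2) a * (dprod sb (m+1) 0 * z) = (dprod sb (m+1) 0 * z) * T (m+2) a
    calc T (m+2) a * (dprod sb (m+1) 0 * z)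
        = (T (m+2) a * dprod sb (m+1) 0) * z := by rw [mul_assoc]
      _ = (dprod sb (m+1) 0 * T (m+2) (a+1)) * z := by rw [tS a h1 h2]
      _ = dprod sb (m+1) 0 * (T (m+2) (a+1) * z) := by rw [mul_assoc]
      _ = dprod sb (m+1) 0 * (z * T (m+2) a) := by rw [R1m a h1 h2]
      _ = (dprod sb (m+1) 0 * z) * T (m+2) a := by rw [mul_assoc]
  -- T_a commutes with Y_b for b > a+1
  have A1 : ∀ d a, 1 ≤ a → a + 1 < m+2-d → Commute (T (m+2) a) (Y (m+2-d)) := by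
    intro d
    induction d with
    | zero => intro a h1 h2; exact F1 a h1 (by omega)
    | succ d ih =>
      intro a h1 h2
      have hb0 : 1 ≤ m+2-(d+1) := by omega
      have hb1 : m+2-(d+1) ≤ m+1 := by omega
      rw [mYrec (m+2-(d+1)) hb0 hb1]
      have c1 : Commute (T (m+2) a) (T (m+2) (m+2-(d+1))) :=
        tco a (m+2-(d+1)) h1 (by omega) (by omega)
      have c2 : Commute (T (m+2) a) (Y (m+2-(d+1)+1)) := by
        rw [show m+2-(d+1)+1 = m+2-d from by omega]
        exact ih a h1 (by omega)
      exact ((c1.mul_right (c2.mul_right c1)).smul_right q⁻¹)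
  have A1' : ∀ a b, 1 ≤ a → a + 1 < b → b ≤ m+2 → Commute (T (m+2) a) (Y b) := by
    intro a b h1 h2 h3
    have h := A1 (m+2-b) a h1 (by omega)
    rwa [show m+2-(m+2-b) = b from by omega] at h
  -- T_{a+1} commutes with Y_a
  have A2 : ∀ a, 1 ≤ a → a + 1 ≤ m+1 → Commute (T (m+2) (a+1)) (Y a) := by
    intro a h1 h2
    rw [mYrec a h1 (by omega), mYrec (a+1) (by omega) h2]
    simp only [smul_mul_assoc, mul_smul_comm, smul_smul]
    refine Commute.smul_right ?_ _
    exact braid_conj (tbr a h1 (by omega)) (A1' a (a+2) h1 (by omega) (by omega)).eq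
  -- T_a commutes with Y_b for b < a
  have A3 : ∀ e b, 1 ≤ b → b + 1 + e ≤ m+1 → Commute (T (m+2) (b+1+e)) (Y b) := by
    intro e
    induction e with
    | zero => intro b h1 h2; exact A2 b h1 h2
    | succ e ih =>
      intro b h1 h2
      rw [mYrec b h1 (by omega)]
      have c1 : Commute (T (m+2) (b+1+(e+1))) (T (m+2) b) :=
        (tco b (b+1+(e+1)) h1 (by omega) (by omega)).symm
      have c2 : Commute (T (m+2) (b+1+(e+1))) (Y (b+1)) := by
        have h := ih (b+1) (by omega) (by omega)
        rwa [show b+1+1+e = b+1+(e+1) from by omega] at h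
      exact ((c1.mul_right (c2.mul_right c1)).smul_right q⁻¹)
  have AllTY : ∀ a b, 1 ≤ b → b + 1 ≤ a → a ≤ m+1 → Commute (T (m+2) a) (Y b) := by
    intro a b h1 h2 h3
    obtain ⟨e, rfl⟩ : ∃ e, a = b + 1 + e := ⟨a-b-1, by omega⟩
    exact A3 e b h1 h3
  -- consecutive commutation
  have Ccons : ∀ d i, i = m+1-d → 1 ≤ i → Commute (Y i) (Y (i+1)) := by
    intro d
    induction d with
    | zero =>
      intro i hid h1
      have : i = m+1 := by omega
      subst this
      exact F2
    | succ d ih =>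
      intro i hid h1
      have hi2 : i ≤ m := by omega
      have hC1 : Commute (Y (i+1)) (Y (i+2)) := ih (i+1) (by omega) (by omega)
      have hD : Commute (Y i) (Y (i+2)) := by
        rw [mYrec i h1 (by omega)]
        have cA : Commute (T (m+2) i) (Y (i+2)) := A1' i (i+2) h1 (by omega) (by omega)
        exact ((cA.mul_left (hC1.mul_left cA)).smul_left q⁻¹)
      rw [mYrec (i+1) (by omega) (by omega)]
      have cB : Commute (Y i) (T (m+2) (i+1)) := (A2 i h1 (by omega)).symm
      exact ((cB.mul_right (hD.mul_right cB)).smul_right q⁻¹)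
  have Ccons' : ∀ i, 1 ≤ i → i ≤ m+1 → Commute (Y i) (Y (i+1)) :=
    fun i h1 h2 => Ccons (m+1-i) i (by omega) h1
  -- general distance
  have dist : ∀ d i, 1 ≤ i → i + d ≤ m+2 → Commute (Y i) (Y (i+d)) := by
    intro d
    induction d with
    | zero => intro i h1 h2; exact Commute.refl _
    | succ d ih =>
      intro i h1 h2
      rcases Nat.eq_zero_or_pos d with rfl | hd
      · exact Ccons' i h1 (by omega)
      · have hYj : Y (i+(d+1)) = q • (sb (i+d) * (Y (i+d) * sb (i+d))) := by
          rw [mYrec (i+d) (by omega) (by omega)]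
          simp only [smul_mul_assoc, mul_smul_comm, smul_smul]
          rw [mul_inv_cancel₀ hq, one_smul]
          rw [show (T (m+2) (i+d) * (Y (i+d+1) * T (m+2) (i+d))) * sb (i+d)
              = T (m+2) (i+d) * (Y (i+d+1) * (T (m+2) (i+d) * sb (i+d))) from by
            simp only [mul_assoc]]
          rw [tsb (i+d) (by omega) (by omega), mul_one, ← mul_assoc,
            sbt (i+d) (by omega) (by omega), one_mul]
          rfl
        rw [hYj]
        have cT : Commute (Y i) (T (m+2) (i+d)) := by
          rcases Nat.eq_zero_or_pos (d-1) with hd1 | hd1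
          · have : d = 1 := by omega
            subst this
            exact (A2 i h1 (by omega)).symm
          · exact (AllTY (i+d) i h1 (by omega) (by omega)).symm
        have cS : Commute (Y i) (sb (i+d)) :=
          commute_of_inv (tsb (i+d) (by omega) (by omega)) (sbt (i+d) (by omega) (by omega)) cT
        have cY : Commute (Y i) (Y (i+d)) := ih i h1 (by omega)
        exact ((cS.mul_right (cY.mul_right cS)).smul_right q)
  -- conclude
  intro i j h1 h2 h3 h4
  rcases le_total i j with h | h
  · obtain ⟨d, rfl⟩ : ∃ d, j = i + d := ⟨j - i, by omega⟩
    exact dist d i h1 (by omega)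
  · obtain ⟨d, rfl⟩ : ∃ d, i = j + d := ⟨i - j, by omega⟩
    exact (dist d j h3 (by omega)).symm

end
end
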